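/- arXiv:2510.19204 — 7 statements merged into one kernel-verified Lean document; each statement's English description precedes it below -/
import Mathlib

section
/- Let S > 0 and let L, K : ℝ → ℝ with L twice continuously differentiable, K continuously differentiable with K' continuously differentiable, L(y) > 0 for all y, satisfying L'' − (L K')' = 0 on ℝ. Assume L'(y) → 0 and K'(y) → 0 as y → +∞, L is bounded, and L(y) → S, K(y) → S as y → +∞. Then L(y) = S e^{−S} e^{K(y)} for all y ∈ ℝ. -/
open Filter

/-- The labor profile is slaved to the capital profile in the leading-order
inner (spike core) system: `L'' - (L K')' = 0` with far-field conditions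
`L(+∞) = K(+∞) = S` forces `L = S e^{-S} e^K`. -/
theorem labor_slaved_to_capital (S : ℝ) (hS : 0 < S) (L K : ℝ → ℝ)
    (hL : ContDiff ℝ 2 L) (hK : ContDiff ℝ 1 K) (hK' : ContDiff ℝ 1 (deriv K))
    (hLpos : ∀ y, 0 < L y)
    (heq : ∀ y, deriv (deriv L) y - deriv (fun t => L t * deriv K t) y = 0)
    (hL'0 : Tendsto (deriv L) atTop (nhds 0))
    (hK'0 : Tendsto (deriv K) atTop (nhds 0))
    (hLbdd : ∃ M, ∀ y, |L y| ≤ M)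
    (hLS : Tendsto L atTop (nhds S))
    (hKS : Tendsto K atTop (nhds S)) :
    ∀ y, L y = S * Real.exp (-S) * Real.exp (K y) := by
  have hLd : Differentiable ℝ L := hL.differentiable (by norm_num)
  have hL'd : Differentiable ℝ (deriv L) :=
    (hL.iterate_deriv' 1 1).differentiable (by norm_num)
  have hK'd : Differentiable ℝ (deriv K) := hK'.differentiable (by norm_num)
  have hKd : Differentiable ℝ K := hK.differentiable (by norm_num)
  have hProd : Differentiable ℝ (fun t => L t * deriv K t) := hLd.mul hK'd
  -- F = L' - L K' is constant
  set F : ℝ → ℝ := fun y => deriv L y - L y * deriv K y with hF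
  have hFd : Differentiable ℝ F := hL'd.sub hProd
  have hFderiv : ∀ y, deriv F y = 0 := by
    intro y
    have := heq y
    rw [hF]
    rw [deriv_fun_sub (hL'd y) (hProd y)]
    linarith
  have hFconst : ∀ y z, F y = F z := by
    intro y z
    have := is_const_of_deriv_eq_zero hFd hFderiv y z
    exact this
  -- F tends to 0 at top, so F ≡ 0
  have hF0 : Tendsto F atTop (nhds 0) := by
    have : Tendsto (fun y => L y * deriv K y) atTop (nhds (S * 0)) :=
      hLS.mul hK'0
    simpa using hL'0.sub this
  have hFzero : ∀ y, F y = 0 := by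
    intro y
    have hconst : Tendsto F atTop (nhds (F y)) := by
      have : F = fun _ => F y := funext fun z => hFconst z y
      rw [this]; exact tendsto_const_nhds
    exact tendsto_nhds_unique hconst hF0
  have hL'eq : ∀ y, deriv L y = L y * deriv K y := by
    intro y; have := hFzero y; simp only [hF] at this; linarith
  -- G = L * exp(-K) is constant
  set G : ℝ → ℝ := fun y => L y * Real.exp (-(K y)) with hG
  have hGd : Differentiable ℝ G := hLd.mul ((hKd.neg).exp)
  have hGderiv : ∀ y, deriv G y = 0 := by
    intro y
    have h1 : HasDerivAt L (deriv L y) y := (hLd y).hasDerivAt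
    have h2 : HasDerivAt (fun t => Real.exp (-(K t)))
        (Real.exp (-(K y)) * (-(deriv K y))) y := by
      have hk : HasDerivAt (fun t => -(K t)) (-(deriv K y)) y :=
        ((hKd y).hasDerivAt).neg
      exact hk.exp
    have h3 := (h1.fun_mul h2)
    rw [h3.deriv, hL'eq y]
    ring
  have hGconst : ∀ y z, G y = G z := fun y z =>
    is_const_of_deriv_eq_zero hGd hGderiv y z
  have hG0 : Tendsto G atTop (nhds (S * Real.exp (-S))) := by
    exact hLS.mul (Real.continuous_exp.continuousAt.tendsto.comp hKS.neg)
  intro y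
  have hconst : Tendsto G atTop (nhds (G y)) := by
    have : G = fun _ => G y := funext fun z => hGconst z y
    rw [this]; exact tendsto_const_nhds
  have hval : G y = S * Real.exp (-S) := tendsto_nhds_unique hconst hG0
  have : L y * Real.exp (-(K y)) = S * Real.exp (-S) := hval
  have hexp : Real.exp (-(K y)) ≠ 0 := Real.exp_ne_zero _
  calc L y = L y * Real.exp (-(K y)) * Real.exp (K y) := by
        rw [mul_assoc, ← Real.exp_add]; simp
    _ = S * Real.exp (-S) * Real.exp (K y) := by rw [this]
end

section
/- Let θ ∈ (0,1) and 0 < S < 1. Then there exists a nonconstant, even, twice continuously differentiable function K : ℝ → ℝ with K(y) > 0 for all y, satisfying the core profile equation K'' − K + S^{1−θ} K^θ e^{(1−θ)(K−S)} = 0 on ℝ, with K'(0) = 0 and K(y) → S, K'(y) → 0 as y → ±∞. -/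
open Filter Set MeasureTheory intervalIntegral Real Topology
namespace CoreProfileAux

noncomputable def fn (θ S u : ℝ) : ℝ :=
  u - S ^ (1 - θ) * u ^ θ * Real.exp ((1 - θ) * (u - S))

noncomputable def W (θ S k : ℝ) : ℝ := ∫ u in S..k, fn θ S u

lemma continuous_fn {θ : ℝ} (S : ℝ) (hθ0 : 0 < θ) : Continuous (fn θ S) := by
  have h1 : Continuous fun u : ℝ => u ^ θ := by
    rw [continuous_iff_continuousAt]
    intro x
    exact Real.continuousAt_rpow_const x θ (Or.inr hθ0.le)
  unfold fn
  fun_prop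

lemma hasDerivAt_W {θ : ℝ} (S : ℝ) (hθ0 : 0 < θ) (k : ℝ) :
    HasDerivAt (W θ S) (fn θ S k) k := by
  refine intervalIntegral.integral_hasDerivAt_right
    ((continuous_fn S hθ0).intervalIntegrable _ _)
    ⟨univ, univ_mem, ((continuous_fn S hθ0).aestronglyMeasurable).restrict⟩
    (continuous_fn S hθ0).continuousAt

lemma continuous_W {θ : ℝ} (S : ℝ) (hθ0 : 0 < θ) : Continuous (W θ S) := by
  rw [continuous_iff_continuousAt]
  exact fun k => (hasDerivAt_W S hθ0 k).continuousAt

lemma fn_eq {θ S u : ℝ} (hS : 0 < S) (hu : 0 < u) :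
    fn θ S u = u * (1 - Real.exp ((1 - θ) * ((Real.log S - S) - (Real.log u - u)))) := by
  have key : S ^ (1 - θ) * u ^ θ * Real.exp ((1 - θ) * (u - S))
      = u * Real.exp ((1 - θ) * ((Real.log S - S) - (Real.log u - u))) := by
    have h2 : u * Real.exp ((1 - θ) * ((Real.log S - S) - (Real.log u - u)))
        = Real.exp (Real.log u + (1 - θ) * ((Real.log S - S) - (Real.log u - u))) := by
      rw [Real.exp_add, Real.exp_log hu]
    rw [Real.rpow_def_of_pos hS, Real.rpow_def_of_pos hu, ← Real.exp_add, ← Real.exp_add, h2,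
      Real.exp_eq_exp]
    ring
  rw [fn, key]
  ring

lemma fn_pos {θ S u : ℝ} (hθ1 : θ < 1) (hS : 0 < S) (hu : 0 < u)
    (h : Real.log S - S < Real.log u - u) : 0 < fn θ S u := by
  rw [fn_eq hS hu]
  have : Real.exp ((1 - θ) * ((Real.log S - S) - (Real.log u - u))) < 1 := by
    rw [Real.exp_lt_one_iff]
    exact mul_neg_of_pos_of_neg (by linarith) (by linarith)
  nlinarith

lemma fn_neg {θ S u : ℝ} (hθ1 : θ < 1) (hS : 0 < S) (hu : 0 < u)
    (h : Real.log u - u < Real.log S - S) : fn θ S u < 0 := by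
  rw [fn_eq hS hu]
  have : 1 < Real.exp ((1 - θ) * ((Real.log S - S) - (Real.log u - u))) := by
    rw [Real.one_lt_exp_iff]
    nlinarith
  nlinarith

lemma fn_S {θ S : ℝ} (hS : 0 < S) : fn θ S S = 0 := by
  rw [fn_eq hS hS]; simp

lemma g_strictMono : StrictMonoOn (fun u : ℝ => Real.log u - u) (Ioc 0 1) := by
  refine strictMonoOn_of_deriv_pos (convex_Ioc 0 1) ?_ ?_
  · exact ContinuousOn.sub
      (fun x hx => (Real.continuousAt_log (ne_of_gt hx.1)).continuousWithinAt) continuousOn_id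
  · intro x hx
    rw [interior_Ioc] at hx
    have hd : HasDerivAt (fun u : ℝ => Real.log u - u) (x⁻¹ - 1) x := by
      exact (Real.hasDerivAt_log (ne_of_gt hx.1)).sub (hasDerivAt_id' x)
    rw [hd.deriv]
    have : 1 < x⁻¹ := one_lt_inv_iff₀.mpr ⟨hx.1, hx.2⟩
    linarith

lemma g_strictAnti : StrictAntiOn (fun u : ℝ => Real.log u - u) (Ici 1) := by
  refine strictAntiOn_of_deriv_neg (convex_Ici 1) ?_ ?_
  · exact ContinuousOn.sub
      (fun x hx => (Real.continuousAt_log (ne_of_gt (lt_of_lt_of_le zero_lt_one hx))).continuousWithinAt)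
      continuousOn_id
  · intro x hx
    rw [interior_Ici] at hx
    have hx0 : (0:ℝ) < x := lt_trans zero_lt_one hx
    have hd : HasDerivAt (fun u : ℝ => Real.log u - u) (x⁻¹ - 1) x := by
      exact (Real.hasDerivAt_log (ne_of_gt hx0)).sub (hasDerivAt_id' x)
    rw [hd.deriv]
    have : x⁻¹ < 1 := by
      rw [inv_lt_one_iff₀]; right; exact hx
    linarith

lemma fn_def {θ S : ℝ} (u : ℝ) :
    fn θ S u = u - S ^ (1 - θ) * u ^ θ * Real.exp ((1 - θ) * (u - S)) := rfl

lemma W_eq (θ S k : ℝ) : W θ S k = ∫ u in S..k, fn θ S u := rfl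

variable {θ S : ℝ}

lemma W_pos_of_le_one (hθ0 : 0 < θ) (hθ1 : θ < 1) (hS0 : 0 < S) {k : ℝ}
    (hk : S < k) (hk1 : k ≤ 1) : 0 < W θ S k := by
  rw [W_eq]
  refine intervalIntegral_pos_of_pos_on ((continuous_fn S hθ0).intervalIntegrable _ _) ?_ hk
  intro u hu
  refine fn_pos hθ1 hS0 (lt_trans hS0 hu.1) ?_
  exact g_strictMono ⟨hS0, by linarith [hu.2]⟩ ⟨lt_trans hS0 hu.1, by linarith [hu.2]⟩ hu.1

lemma exists_W_neg (hθ0 : 0 < θ) (hθ1 : θ < 1) (hS0 : 0 < S) :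
    ∃ b : ℝ, 1 < b ∧ W θ S b < 0 := by
  set e := 1 - θ with he_def
  have he : 0 < e := by simp [he_def]; linarith
  set c₂ : ℝ := S ^ (1 - θ) * Real.exp (-(1-θ) * S) with hc₂_def
  have hc₂ : 0 < c₂ := by positivity
  -- pointwise bound for u ≥ 1
  have hbound : ∀ u : ℝ, 1 ≤ u → fn θ S u ≤ u - c₂ * Real.exp (e * u) := by
    intro u hu
    have h1 : (1:ℝ) ≤ u ^ θ := Real.one_le_rpow hu hθ0.le
    have h2 : Real.exp ((1 - θ) * (u - S)) = Real.exp (e * u) * Real.exp (-(1-θ) * S) := by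
      rw [← Real.exp_add, he_def]; ring_nf
    rw [fn_def, h2]
    have hp : (0:ℝ) < S ^ (1 - θ) := Real.rpow_pos_of_pos hS0 _
    have hq : (0:ℝ) < Real.exp (-(1-θ) * S) := Real.exp_pos _
    have hr : (0:ℝ) < Real.exp (e * u) := Real.exp_pos _
    have key : 0 ≤ (u ^ θ - 1) * (S ^ (1 - θ) * Real.exp (-(1-θ)*S) * Real.exp (e*u)) :=
      mul_nonneg (by linarith) (by positivity)
    have hc : c₂ = S ^ (1 - θ) * Real.exp (-(1-θ) * S) := hc₂_def
    rw [hc]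
    nlinarith [key]
  -- the bound tends to -∞
  have htend : Tendsto (fun u : ℝ => u - c₂ * Real.exp (e * u)) atTop atBot := by
    have h1 : Tendsto (fun u : ℝ => Real.exp (e * u) / u) atTop atTop := by
      have h0 : Tendsto (fun u : ℝ => e * u) atTop atTop :=
        Tendsto.const_mul_atTop he tendsto_id
      have := (Real.tendsto_exp_div_pow_atTop 1).comp h0
      have h2 : Tendsto (fun u : ℝ => (Real.exp (e*u) / (e*u)) * e) atTop atTop :=
        Tendsto.atTop_mul_const he (by simpa [Function.comp_def] using this)
      refine h2.congr' ?_
      filter_upwards [eventually_gt_atTop 0] with u hu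
      field_simp
    have h3 : Tendsto (fun u : ℝ => u * (c₂ * (Real.exp (e*u)/u) - 1)) atTop atTop := by
      refine Tendsto.atTop_mul_atTop₀ tendsto_id ?_
      exact tendsto_atTop_add_const_right _ _ (h1.const_mul_atTop hc₂)
    have h4 : Tendsto (fun u : ℝ => -(u * (c₂ * (Real.exp (e*u)/u) - 1))) atTop atBot :=
      tendsto_neg_atTop_atBot.comp h3
    refine h4.congr' ?_
    filter_upwards [eventually_gt_atTop 0] with u hu
    field_simp
    ring
  obtain ⟨M, hM⟩ : ∃ M : ℝ, ∀ u ≥ M, u - c₂ * Real.exp (e * u) ≤ -1 := by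
    have := htend.eventually (eventually_le_atBot (-1 : ℝ))
    rw [eventually_atTop] at this
    exact this
  set M' : ℝ := max M 1 with hM'
  have hM'1 : (1:ℝ) ≤ M' := le_max_right _ _
  have hfle : ∀ u ∈ Icc M' (M' + |W θ S M'| + 1), fn θ S u ≤ -1 := by
    intro u hu
    have h1 : 1 ≤ u := le_trans hM'1 hu.1
    have h2 : M ≤ u := le_trans (le_max_left _ _) hu.1
    exact le_trans (hbound u h1) (hM u h2)
  set b : ℝ := M' + |W θ S M'| + 1 with hb
  have hM'b : M' ≤ b := by have := abs_nonneg (W θ S M'); simp only [hb]; linarith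
  refine ⟨b, ?_, ?_⟩
  · have := abs_nonneg (W θ S M'); simp [hb]; linarith
  · have hsplit : W θ S M' + (∫ u in M'..b, fn θ S u) = W θ S b := by
      rw [W_eq, W_eq]
      exact intervalIntegral.integral_add_adjacent_intervals
        ((continuous_fn S hθ0).intervalIntegrable _ _)
        ((continuous_fn S hθ0).intervalIntegrable _ _)
    have hmono : (∫ u in M'..b, fn θ S u) ≤ ∫ u in M'..b, (-1 : ℝ) := by
      refine intervalIntegral.integral_mono_on hM'b
        ((continuous_fn S hθ0).intervalIntegrable _ _)
        (intervalIntegrable_const) hfle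
    rw [intervalIntegral.integral_const] at hmono
    have habs : W θ S M' ≤ |W θ S M'| := le_abs_self _
    have : (b - M') • (-1 : ℝ) = -(|W θ S M'| + 1) := by
      simp [hb]; ring
    rw [this] at hmono
    linarith [hsplit, habs, hmono]

noncomputable def Khat (θ S : ℝ) : ℝ := sInf {k | 1 ≤ k ∧ W θ S k ≤ 0}

lemma Khat_mem (hθ0 : 0 < θ) (hθ1 : θ < 1) (hS0 : 0 < S) :
    1 ≤ Khat θ S ∧ W θ S (Khat θ S) ≤ 0 := by
  have hcl : IsClosed {k | 1 ≤ k ∧ W θ S k ≤ 0} := by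
    have : {k | 1 ≤ k ∧ W θ S k ≤ 0} = Ici 1 ∩ (W θ S) ⁻¹' (Iic 0) := by
      ext k; simp [Set.mem_setOf_eq, and_comm]
    rw [this]
    exact isClosed_Ici.inter (isClosed_Iic.preimage (continuous_W S hθ0))
  obtain ⟨b, hb1, hb2⟩ := exists_W_neg hθ0 hθ1 hS0
  have hne : {k | 1 ≤ k ∧ W θ S k ≤ 0}.Nonempty := ⟨b, hb1.le, hb2.le⟩
  have hbdd : BddBelow {k | 1 ≤ k ∧ W θ S k ≤ 0} := ⟨1, fun k hk => hk.1⟩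
  exact hcl.csInf_mem hne hbdd

lemma W_pos_of_lt_Khat (hθ0 : 0 < θ) (hθ1 : θ < 1) (hS0 : 0 < S) (hS1 : S < 1) {k : ℝ}
    (hk : S < k) (hk2 : k < Khat θ S) : 0 < W θ S k := by
  rcases le_or_gt k 1 with h1 | h1
  · exact W_pos_of_le_one hθ0 hθ1 hS0 hk h1
  · by_contra h
    push_neg at h
    have hmem : k ∈ {k | 1 ≤ k ∧ W θ S k ≤ 0} := ⟨h1.le, h⟩
    have hbdd : BddBelow {k | 1 ≤ k ∧ W θ S k ≤ 0} := ⟨1, fun k hk => hk.1⟩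
    exact absurd (csInf_le hbdd hmem) (not_le.mpr hk2)

lemma one_lt_Khat (hθ0 : 0 < θ) (hθ1 : θ < 1) (hS0 : 0 < S) (hS1 : S < 1) :
    1 < Khat θ S := by
  rcases lt_or_eq_of_le (Khat_mem hθ0 hθ1 hS0).1 with h | h
  · exact h
  · exfalso
    have := (Khat_mem hθ0 hθ1 hS0).2
    rw [← h] at this
    exact absurd this (not_le.mpr (W_pos_of_le_one hθ0 hθ1 hS0 hS1 le_rfl))

lemma S_lt_Khat (hθ0 : 0 < θ) (hθ1 : θ < 1) (hS0 : 0 < S) (hS1 : S < 1) :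
    S < Khat θ S := lt_trans hS1 (one_lt_Khat hθ0 hθ1 hS0 hS1)

lemma W_Khat (hθ0 : 0 < θ) (hθ1 : θ < 1) (hS0 : 0 < S) (hS1 : S < 1) :
    W θ S (Khat θ S) = 0 := by
  refine le_antisymm (Khat_mem hθ0 hθ1 hS0).2 ?_
  have h1 : 1 < Khat θ S := one_lt_Khat hθ0 hθ1 hS0 hS1
  have htd : Tendsto (W θ S) (𝓝[<] (Khat θ S)) (𝓝 (W θ S (Khat θ S))) :=
    ((continuous_W S hθ0).tendsto _).mono_left nhdsWithin_le_nhds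
  refine ge_of_tendsto htd ?_
  filter_upwards [Ioo_mem_nhdsLT_of_mem (Set.right_mem_Ioc.mpr h1)] with k hk
  exact (W_pos_of_lt_Khat hθ0 hθ1 hS0 hS1 (lt_trans hS1 hk.1) hk.2).le

lemma fn_Khat_neg (hθ0 : 0 < θ) (hθ1 : θ < 1) (hS0 : 0 < S) (hS1 : S < 1) :
    fn θ S (Khat θ S) < 0 := by
  set k := Khat θ S with hk_def
  have h1 : 1 < k := one_lt_Khat hθ0 hθ1 hS0 hS1
  have hk0 : 0 < k := lt_trans zero_lt_one h1
  rcases lt_or_ge (Real.log k - k) (Real.log S - S) with h | h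
  · exact fn_neg hθ1 hS0 hk0 h
  · exfalso
    have hpos : 0 < ∫ u in (1:ℝ)..k, fn θ S u := by
      refine intervalIntegral_pos_of_pos_on ((continuous_fn S hθ0).intervalIntegrable _ _) ?_ h1
      intro u hu
      have hu1 : (1:ℝ) ≤ u := hu.1.le
      refine fn_pos hθ1 hS0 (lt_of_lt_of_le zero_lt_one hu1) ?_
      calc Real.log S - S ≤ Real.log k - k := h
        _ < Real.log u - u := g_strictAnti hu1 h1.le hu.2
    have hsplit : W θ S 1 + (∫ u in (1:ℝ)..k, fn θ S u) = W θ S k := by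
      rw [W_eq, W_eq]
      exact intervalIntegral.integral_add_adjacent_intervals
        ((continuous_fn S hθ0).intervalIntegrable _ _)
        ((continuous_fn S hθ0).intervalIntegrable _ _)
    have hW1 : 0 < W θ S 1 := W_pos_of_le_one hθ0 hθ1 hS0 hS1 le_rfl
    have hWk : W θ S k = 0 := W_Khat hθ0 hθ1 hS0 hS1
    linarith

noncomputable def G (θ S u : ℝ) : ℝ := (Real.sqrt (2 * W θ S u))⁻¹

lemma G_nonneg (θ S : ℝ) (u : ℝ) : 0 ≤ G θ S u := by
  unfold G; positivity

lemma measurable_G (hθ0 : 0 < θ) : Measurable (G θ S) := by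
  unfold G
  exact ((Real.continuous_sqrt.comp (continuous_const.mul (continuous_W S hθ0))).measurable).inv

lemma G_pos (hθ0 : 0 < θ) (hθ1 : θ < 1) (hS0 : 0 < S) (hS1 : S < 1) {u : ℝ}
    (h1 : S < u) (h2 : u < Khat θ S) : 0 < G θ S u := by
  have hW : 0 < W θ S u := W_pos_of_lt_Khat hθ0 hθ1 hS0 hS1 h1 h2
  unfold G
  rw [inv_pos, Real.sqrt_pos]
  linarith

lemma continuousAt_G (hθ0 : 0 < θ) (hθ1 : θ < 1) (hS0 : 0 < S) (hS1 : S < 1) {u : ℝ}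
    (h1 : S < u) (h2 : u < Khat θ S) : ContinuousAt (G θ S) u := by
  have hW : 0 < W θ S u := W_pos_of_lt_Khat hθ0 hθ1 hS0 hS1 h1 h2
  have hne : Real.sqrt (2 * W θ S u) ≠ 0 := ne_of_gt (Real.sqrt_pos.mpr (by linarith))
  exact ((Real.continuous_sqrt.comp
    (continuous_const.mul (continuous_W S hθ0))).continuousAt).inv₀ hne

/-- quadratic upper bound for `W` on `[S, Khat]`. -/
lemma W_le_quad (hθ0 : 0 < θ) (hθ1 : θ < 1) (hS0 : 0 < S) (hS1 : S < 1) {u : ℝ}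
    (h1 : S ≤ u) (h2 : u ≤ Khat θ S) :
    W θ S u ≤ (Khat θ S / S) * (u - S)^2 / 2 := by
  set C : ℝ := Khat θ S / S with hC_def
  have hKh : 0 < Khat θ S := lt_trans zero_lt_one (one_lt_Khat hθ0 hθ1 hS0 hS1)
  have hC : 0 < C := by positivity
  have hfn_le : ∀ t ∈ Icc S u, fn θ S t ≤ C * (t - S) := by
    intro t ht
    have ht0 : 0 < t := lt_of_lt_of_le hS0 ht.1
    have hts : 0 ≤ t - S := by linarith [ht.1]
    have htK : t ≤ Khat θ S := le_trans ht.2 h2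
    have step1 : fn θ S t ≤ t * ((1 - θ) * ((Real.log t - t) - (Real.log S - S))) := by
      rw [fn_eq hS0 ht0]
      set z := (1 - θ) * ((Real.log S - S) - (Real.log t - t)) with hz_def
      have h7 : (1 - θ) * ((Real.log t - t) - (Real.log S - S)) = -z := by rw [hz_def]; ring
      rw [h7]
      have hz := Real.add_one_le_exp z
      exact mul_le_mul_of_nonneg_left (by linarith) ht0.le
    rcases le_or_gt (Real.log t - t) (Real.log S - S) with hg | hg
    · have h8 : (1 - θ) * ((Real.log t - t) - (Real.log S - S)) ≤ 0 :=
        mul_nonpos_iff.mpr (Or.inl ⟨by linarith, by linarith⟩)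
      nlinarith [mul_nonneg ht0.le (neg_nonneg.mpr h8), mul_nonneg hC.le hts]
    · have hlog : Real.log t - Real.log S ≤ (t - S)/S := by
        have h3 : Real.log (t/S) ≤ t/S - 1 := Real.log_le_sub_one_of_pos (by positivity)
        rw [Real.log_div (ne_of_gt ht0) (ne_of_gt hS0)] at h3
        have h4 : t/S - 1 = (t - S)/S := by field_simp
        linarith [h4 ▸ h3]
      have hgb : (Real.log t - t) - (Real.log S - S) ≤ (t - S)/S := by linarith
      have hgb0 : 0 ≤ (Real.log t - t) - (Real.log S - S) := by linarith
      calc fn θ S t ≤ t * ((1 - θ) * ((Real.log t - t) - (Real.log S - S))) := step1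
        _ ≤ t * ((t - S)/S) := by
            refine mul_le_mul_of_nonneg_left ?_ ht0.le
            have h4 : (1 - θ) * ((Real.log t - t) - (Real.log S - S))
                ≤ 1 * ((Real.log t - t) - (Real.log S - S)) := by nlinarith
            linarith
        _ ≤ C * (t - S) := by
            rw [hC_def, show t * ((t - S)/S) = (t*(t-S))/S by ring,
              show Khat θ S / S * (t - S) = (Khat θ S * (t-S))/S by ring]
            have h6 : t * (t - S) ≤ Khat θ S * (t - S) := mul_le_mul_of_nonneg_right htK hts
            gcongr
  have hcont : Continuous fun t : ℝ => C * (t - S) := by continuity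
  have hmono : (∫ t in S..u, fn θ S t) ≤ ∫ t in S..u, C * (t - S) :=
    intervalIntegral.integral_mono_on h1 ((continuous_fn S hθ0).intervalIntegrable _ _)
      (hcont.intervalIntegrable _ _) hfn_le
  have heval : (∫ t in S..u, C * (t - S)) = C * (u - S)^2 / 2 := by
    have hF : ∀ t : ℝ, HasDerivAt (fun t => C * (t - S)^2 / 2) (C * (t - S)) t := by
      intro t
      have h := (((hasDerivAt_id t).sub_const S).pow 2).const_mul (C/2)
      convert h using 1
      · rfl
      · rfl
      · ext x; simp only [id_eq, Pi.pow_apply]; ring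
      · simp; ring
    rw [intervalIntegral.integral_eq_sub_of_hasDerivAt (fun t _ => hF t)
      (hcont.intervalIntegrable _ _)]
    ring
  rw [W_eq]
  linarith

lemma exists_delta (hθ0 : 0 < θ) (hθ1 : θ < 1) (hS0 : 0 < S) (hS1 : S < 1) :
    ∃ δ : ℝ, 0 < δ ∧ S < Khat θ S - δ ∧
      ∀ u ∈ Icc (Khat θ S - δ) (Khat θ S),
        (-(fn θ S (Khat θ S))/2) * (Khat θ S - u) ≤ W θ S u := by
  set k := Khat θ S with hk_def
  have hSk : S < k := S_lt_Khat hθ0 hθ1 hS0 hS1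
  have hfneg : fn θ S k < 0 := fn_Khat_neg hθ0 hθ1 hS0 hS1
  have hev : (fn θ S) ⁻¹' (Iio (fn θ S k / 2)) ∈ 𝓝 k := by
    refine (continuous_fn S hθ0).continuousAt ?_
    exact Iio_mem_nhds (by linarith)
  obtain ⟨r, hr0, hr⟩ := Metric.mem_nhds_iff.mp hev
  set δ := min (r/2) ((k - S)/2) with hδ_def
  have hδ0 : 0 < δ := lt_min (by linarith) (by linarith)
  have hδr : δ < r := lt_of_le_of_lt (min_le_left _ _) (by linarith)
  have hδS : S < k - δ := by
    have : δ ≤ (k - S)/2 := min_le_right _ _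
    linarith
  have hball : ∀ t ∈ Icc (k - δ) k, fn θ S t < fn θ S k / 2 := by
    intro t ht
    apply hr
    rw [Metric.mem_ball, Real.dist_eq, abs_lt]
    constructor
    · linarith [ht.1]
    · linarith [ht.2]
  refine ⟨δ, hδ0, hδS, ?_⟩
  intro u hu
  have hWk : W θ S k = 0 := W_Khat hθ0 hθ1 hS0 hS1
  have hsplit : W θ S u + (∫ t in u..k, fn θ S t) = W θ S k := by
    rw [W_eq, W_eq]
    exact intervalIntegral.integral_add_adjacent_intervals
      ((continuous_fn S hθ0).intervalIntegrable _ _)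
      ((continuous_fn S hθ0).intervalIntegrable _ _)
  have hmono : (∫ t in u..k, fn θ S t) ≤ ∫ t in u..k, (fn θ S k / 2) := by
    refine intervalIntegral.integral_mono_on hu.2
      ((continuous_fn S hθ0).intervalIntegrable _ _) intervalIntegrable_const ?_
    exact fun t ht => (hball t ⟨le_trans hu.1 ht.1, ht.2⟩).le
  rw [intervalIntegral.integral_const, smul_eq_mul] at hmono
  nlinarith [hmono, hsplit]

lemma G_intervalIntegrable (hθ0 : 0 < θ) (hθ1 : θ < 1) (hS0 : 0 < S) (hS1 : S < 1) {k : ℝ}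
    (hk : S < k) (hk2 : k ≤ Khat θ S) :
    IntervalIntegrable (G θ S) volume k (Khat θ S) := by
  obtain ⟨δ, hδ0, hδS, hlin⟩ := exists_delta hθ0 hθ1 hS0 hS1
  set kh := Khat θ S with hkh_def
  set c : ℝ := -(fn θ S kh)/2 with hc_def
  have hc : 0 < c := by
    have := fn_Khat_neg hθ0 hθ1 hS0 hS1
    simp only [hc_def]
    linarith
  -- the comparison function near kh
  set B : ℝ → ℝ := fun u => (Real.sqrt (2*c))⁻¹ * (kh - u) ^ (-(1/2) : ℝ) with hB_def
  have hBint : IntervalIntegrable B volume (kh - δ) kh := by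
    have base : IntervalIntegrable (fun x : ℝ => x ^ (-(1/2) : ℝ)) volume 0 δ :=
      intervalIntegrable_rpow' (by norm_num)
    have h1 := (base.comp_sub_left kh).symm
    simp only [sub_zero] at h1
    exact h1.const_mul _
  have hGB : ∀ u ∈ Ioc (kh - δ) kh, ‖G θ S u‖ ≤ B u := by
    intro u hu
    have hGnn := G_nonneg θ S u
    rw [Real.norm_eq_abs, abs_of_nonneg hGnn]
    rcases eq_or_lt_of_le hu.2 with heq | hlt
    · -- u = kh : both sides are 0
      have hW0 : W θ S kh = 0 := W_Khat hθ0 hθ1 hS0 hS1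
      have h1 : G θ S u = 0 := by
        unfold G
        rw [heq, hW0]
        simp
      have h2 : B u = 0 := by
        simp only [hB_def, heq, sub_self]
        rw [Real.zero_rpow (by norm_num)]
        ring
      rw [h1, h2]
    · have hWlb : c * (kh - u) ≤ W θ S u := by
        have := hlin u ⟨hu.1.le, hu.2⟩
        linarith
      have hku : 0 < kh - u := by linarith
      have hsq : Real.sqrt (2 * (c * (kh - u))) ≤ Real.sqrt (2 * W θ S u) :=
        Real.sqrt_le_sqrt (by linarith)
      have hpos : 0 < Real.sqrt (2 * (c * (kh - u))) := Real.sqrt_pos.mpr (by positivity)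
      have hinv : (Real.sqrt (2 * W θ S u))⁻¹ ≤ (Real.sqrt (2 * (c * (kh - u))))⁻¹ := by
        rw [← one_div, ← one_div]
        exact one_div_le_one_div_of_le hpos hsq
      have hfac : Real.sqrt (2 * (c * (kh - u))) = Real.sqrt (2*c) * Real.sqrt (kh - u) := by
        rw [← Real.sqrt_mul (by positivity)]
        ring_nf
      have hrp : (Real.sqrt (kh - u))⁻¹ = (kh - u) ^ (-(1/2) : ℝ) := by
        rw [Real.sqrt_eq_rpow, ← Real.rpow_neg hku.le]
      calc G θ S u ≤ (Real.sqrt (2 * (c * (kh - u))))⁻¹ := hinv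
        _ = (Real.sqrt (2*c))⁻¹ * (kh - u) ^ (-(1/2) : ℝ) := by
            rw [hfac, mul_inv, hrp]
        _ = B u := rfl
  have hnear : IntervalIntegrable (G θ S) volume (kh - δ) kh := by
    refine hBint.mono_fun' ((measurable_G hθ0).aestronglyMeasurable.restrict) ?_
    rw [uIoc_of_le (by linarith : kh - δ ≤ kh)]
    exact (ae_restrict_iff' measurableSet_Ioc).mpr (ae_of_all _ hGB)
  rcases le_or_gt (kh - δ) k with h | h
  · refine hnear.mono_set ?_
    rw [uIcc_of_le hk2, uIcc_of_le (by linarith : kh - δ ≤ kh)]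
    exact Icc_subset_Icc h le_rfl
  · have hfar : IntervalIntegrable (G θ S) volume k (kh - δ) := by
      refine (ContinuousOn.intervalIntegrable ?_)
      intro u hu
      rw [uIcc_of_le h.le] at hu
      exact (continuousAt_G hθ0 hθ1 hS0 hS1 (lt_of_lt_of_le hk hu.1)
        (by linarith [hu.2])).continuousWithinAt
    exact hfar.trans hnear

noncomputable def T (θ S k : ℝ) : ℝ := ∫ u in k..Khat θ S, G θ S u

lemma T_Khat (θ S : ℝ) : T θ S (Khat θ S) = 0 := intervalIntegral.integral_same

lemma T_nonneg (hθ0 : 0 < θ) (hθ1 : θ < 1) (hS0 : 0 < S) (hS1 : S < 1) {k : ℝ}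
    (hk : S < k) (hk2 : k ≤ Khat θ S) : 0 ≤ T θ S k :=
  intervalIntegral.integral_nonneg hk2 (fun u _ => G_nonneg θ S u)

lemma T_split (hθ0 : 0 < θ) (hθ1 : θ < 1) (hS0 : 0 < S) (hS1 : S < 1) {k₁ k₂ : ℝ}
    (h1 : S < k₁) (h12 : k₁ ≤ k₂) (h2 : k₂ ≤ Khat θ S) :
    T θ S k₁ = (∫ u in k₁..k₂, G θ S u) + T θ S k₂ := by
  refine (intervalIntegral.integral_add_adjacent_intervals ?_ ?_).symm
  · refine (G_intervalIntegrable hθ0 hθ1 hS0 hS1 h1 (le_trans h12 h2)).mono_set ?_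
    rw [uIcc_of_le h12, uIcc_of_le (le_trans h12 h2)]
    exact Icc_subset_Icc le_rfl h2
  · exact G_intervalIntegrable hθ0 hθ1 hS0 hS1 (lt_of_lt_of_le h1 h12) h2

lemma T_strictAntiOn (hθ0 : 0 < θ) (hθ1 : θ < 1) (hS0 : 0 < S) (hS1 : S < 1) :
    StrictAntiOn (T θ S) (Ioc S (Khat θ S)) := by
  intro k₁ h₁ k₂ h₂ h12
  have hsplit := T_split hθ0 hθ1 hS0 hS1 h₁.1 h12.le h₂.2
  have hpos : 0 < ∫ u in k₁..k₂, G θ S u := by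
    refine intervalIntegral_pos_of_pos_on ?_ ?_ h12
    · refine (G_intervalIntegrable hθ0 hθ1 hS0 hS1 h₁.1 (le_trans h12.le h₂.2)).mono_set ?_
      rw [uIcc_of_le h12.le, uIcc_of_le (le_trans h12.le h₂.2)]
      exact Icc_subset_Icc le_rfl h₂.2
    · intro u hu
      exact G_pos hθ0 hθ1 hS0 hS1 (lt_trans h₁.1 hu.1) (lt_of_lt_of_le hu.2 h₂.2)
  linarith

lemma T_pos (hθ0 : 0 < θ) (hθ1 : θ < 1) (hS0 : 0 < S) (hS1 : S < 1) {k : ℝ}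
    (hk : S < k) (hk2 : k < Khat θ S) : 0 < T θ S k := by
  have := T_strictAntiOn hθ0 hθ1 hS0 hS1 ⟨hk, hk2.le⟩
    ⟨S_lt_Khat hθ0 hθ1 hS0 hS1, le_rfl⟩ hk2
  rw [T_Khat] at this
  exact this

lemma T_continuousOn (hθ0 : 0 < θ) (hθ1 : θ < 1) (hS0 : 0 < S) (hS1 : S < 1) {k₁ : ℝ}
    (h1 : S < k₁) (h2 : k₁ ≤ Khat θ S) :
    ContinuousOn (T θ S) (Icc k₁ (Khat θ S)) := by
  have hInt : IntegrableOn (G θ S) (uIcc k₁ (Khat θ S)) volume := by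
    rw [uIcc_of_le h2, ← intervalIntegrable_iff_integrableOn_Icc_of_le h2]
    exact G_intervalIntegrable hθ0 hθ1 hS0 hS1 h1 h2
  have := continuousOn_primitive_interval_left hInt
  rw [uIcc_of_le h2] at this
  exact this

lemma exists_T_ge (hθ0 : 0 < θ) (hθ1 : θ < 1) (hS0 : 0 < S) (hS1 : S < 1) (y : ℝ) :
    ∃ k, S < k ∧ k < Khat θ S ∧ y ≤ T θ S k := by
  set kh := Khat θ S with hkh_def
  have hSk : S < kh := S_lt_Khat hθ0 hθ1 hS0 hS1
  set k₀ : ℝ := (S + kh)/2 with hk₀_def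
  have hk₀1 : S < k₀ := by simp only [hk₀_def]; linarith
  have hk₀2 : k₀ < kh := by simp only [hk₀_def]; linarith
  set c : ℝ := kh / S with hc_def
  have hc : 0 < c := by
    have : 0 < kh := by linarith
    positivity
  have hsc : 0 < Real.sqrt c := Real.sqrt_pos.mpr hc
  set yb : ℝ := max y 0 with hyb_def
  set k₁ : ℝ := S + (k₀ - S) * Real.exp (-(Real.sqrt c) * yb) with hk₁_def
  have hek : Real.exp (-(Real.sqrt c) * yb) ≤ 1 := by
    rw [Real.exp_le_one_iff]
    have : 0 ≤ yb := le_max_right _ _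
    nlinarith
  have hk₁S : S < k₁ := by
    have : 0 < (k₀ - S) * Real.exp (-(Real.sqrt c) * yb) :=
      mul_pos (by linarith) (Real.exp_pos _)
    simp only [hk₁_def]; linarith
  have hk₁0 : k₁ ≤ k₀ := by
    have h5 : (k₀ - S) * Real.exp (-(Real.sqrt c) * yb) ≤ (k₀ - S) * 1 :=
      mul_le_mul_of_nonneg_left hek (by linarith)
    simp only [hk₁_def]; linarith
  -- lower bound for G on [k₁, k₀]
  have hGlb : ∀ u ∈ Icc k₁ k₀, (Real.sqrt c)⁻¹ * (u - S)⁻¹ ≤ G θ S u := by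
    intro u hu
    have huS : S < u := lt_of_lt_of_le hk₁S hu.1
    have huk : u < kh := lt_of_le_of_lt hu.2 hk₀2
    have hWpos : 0 < W θ S u := W_pos_of_lt_Khat hθ0 hθ1 hS0 hS1 huS huk
    have hq : W θ S u ≤ c * (u - S)^2 / 2 := W_le_quad hθ0 hθ1 hS0 hS1 huS.le huk.le
    have hsq : Real.sqrt (2 * W θ S u) ≤ Real.sqrt c * (u - S) := by
      have h6 : Real.sqrt (2 * W θ S u) ≤ Real.sqrt (c * (u - S)^2) :=
        Real.sqrt_le_sqrt (by linarith)
      have h7 : Real.sqrt (c * (u - S)^2) = Real.sqrt c * (u - S) := by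
        rw [Real.sqrt_mul hc.le, Real.sqrt_sq (by linarith)]
      linarith [h7 ▸ h6]
    have hpos : 0 < Real.sqrt (2 * W θ S u) := Real.sqrt_pos.mpr (by linarith)
    have := one_div_le_one_div_of_le hpos hsq
    rw [one_div, one_div] at this
    calc (Real.sqrt c)⁻¹ * (u - S)⁻¹ = (Real.sqrt c * (u - S))⁻¹ := (mul_inv _ _).symm
      _ ≤ (Real.sqrt (2 * W θ S u))⁻¹ := this
      _ = G θ S u := rfl
  -- the explicit integral of the lower bound
  have heval : (∫ u in k₁..k₀, (Real.sqrt c)⁻¹ * (u - S)⁻¹)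
      = (Real.sqrt c)⁻¹ * (Real.log (k₀ - S) - Real.log (k₁ - S)) := by
    have hF : ∀ u ∈ uIcc k₁ k₀, HasDerivAt (fun u => (Real.sqrt c)⁻¹ * Real.log (u - S))
        ((Real.sqrt c)⁻¹ * (u - S)⁻¹) u := by
      intro u hu
      rw [uIcc_of_le hk₁0] at hu
      have huS : 0 < u - S := by linarith [lt_of_lt_of_le hk₁S hu.1]
      have h8 : HasDerivAt (fun u : ℝ => u - S) 1 u := (hasDerivAt_id u).sub_const S
      have h9 : HasDerivAt (fun u : ℝ => Real.log (u - S)) ((u - S)⁻¹ * 1) u := by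
        simpa [Function.comp_def] using (Real.hasDerivAt_log (ne_of_gt huS)).comp u h8
      rw [mul_one] at h9
      exact h9.const_mul _
    have hcont : ContinuousOn (fun u : ℝ => (Real.sqrt c)⁻¹ * (u - S)⁻¹) (uIcc k₁ k₀) := by
      rw [uIcc_of_le hk₁0]
      intro u hu
      have huS : (0:ℝ) < u - S := by linarith [lt_of_lt_of_le hk₁S hu.1]
      exact (continuousWithinAt_const.mul
        (((continuousWithinAt_id.sub continuousWithinAt_const)).inv₀ (ne_of_gt huS)))
    rw [intervalIntegral.integral_eq_sub_of_hasDerivAt hF (hcont.intervalIntegrable)]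
    ring
  have hlog : Real.log (k₁ - S) = Real.log (k₀ - S) - Real.sqrt c * yb := by
    have h10 : k₁ - S = (k₀ - S) * Real.exp (-(Real.sqrt c) * yb) := by
      simp only [hk₁_def]; ring
    rw [h10, Real.log_mul (by linarith) (Real.exp_ne_zero _), Real.log_exp]
    ring
  have hmono : (∫ u in k₁..k₀, (Real.sqrt c)⁻¹ * (u - S)⁻¹) ≤ ∫ u in k₁..k₀, G θ S u := by
    refine intervalIntegral.integral_mono_on hk₁0 ?_ ?_ hGlb
    · refine ContinuousOn.intervalIntegrable ?_
      rw [uIcc_of_le hk₁0]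
      intro u hu
      have huS : (0:ℝ) < u - S := by linarith [lt_of_lt_of_le hk₁S hu.1]
      exact (continuousWithinAt_const.mul
        (((continuousWithinAt_id.sub continuousWithinAt_const)).inv₀ (ne_of_gt huS)))
    · refine (G_intervalIntegrable hθ0 hθ1 hS0 hS1 hk₁S (by linarith)).mono_set ?_
      rw [uIcc_of_le hk₁0, uIcc_of_le (by linarith : k₁ ≤ kh)]
      exact Icc_subset_Icc le_rfl hk₀2.le
  have hsplit := T_split hθ0 hθ1 hS0 hS1 hk₁S hk₁0 hk₀2.le
  have hT₀ : 0 ≤ T θ S k₀ := T_nonneg hθ0 hθ1 hS0 hS1 hk₀1 hk₀2.le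
  refine ⟨k₁, hk₁S, lt_of_le_of_lt hk₁0 hk₀2, ?_⟩
  have hyle : y ≤ yb := le_max_left _ _
  have hfinal : (Real.sqrt c)⁻¹ * (Real.log (k₀ - S) - Real.log (k₁ - S)) = yb := by
    rw [hlog]
    field_simp
    ring
  linarith [heval ▸ hmono, hsplit, hfinal ▸ (heval ▸ hmono)]

lemma exists_T_eq (hθ0 : 0 < θ) (hθ1 : θ < 1) (hS0 : 0 < S) (hS1 : S < 1) {y : ℝ}
    (hy : 0 ≤ y) : ∃ k ∈ Ioc S (Khat θ S), T θ S k = y := by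
  obtain ⟨k₁, hk₁S, hk₁K, hk₁T⟩ := exists_T_ge hθ0 hθ1 hS0 hS1 y
  have hIVT := intermediate_value_Icc' hk₁K.le (T_continuousOn hθ0 hθ1 hS0 hS1 hk₁S hk₁K.le)
  have hmem : y ∈ Icc (T θ S (Khat θ S)) (T θ S k₁) := by
    rw [T_Khat]
    exact ⟨hy, hk₁T⟩
  obtain ⟨k, hk, hTk⟩ := hIVT hmem
  exact ⟨k, ⟨lt_of_lt_of_le hk₁S hk.1, hk.2⟩, hTk⟩

noncomputable def KK (θ S y : ℝ) : ℝ := Function.invFunOn (T θ S) (Ioc S (Khat θ S)) |y|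

lemma KK_even (θ S y : ℝ) : KK θ S (-y) = KK θ S y := by rw [KK, abs_neg, KK]

lemma KK_mem (hθ0 : 0 < θ) (hθ1 : θ < 1) (hS0 : 0 < S) (hS1 : S < 1) (y : ℝ) :
    KK θ S y ∈ Ioc S (Khat θ S) :=
  Function.invFunOn_mem (exists_T_eq hθ0 hθ1 hS0 hS1 (abs_nonneg y))

lemma T_KK (hθ0 : 0 < θ) (hθ1 : θ < 1) (hS0 : 0 < S) (hS1 : S < 1) (y : ℝ) :
    T θ S (KK θ S y) = |y| :=
  Function.invFunOn_eq (exists_T_eq hθ0 hθ1 hS0 hS1 (abs_nonneg y))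

lemma KK_eq (hθ0 : 0 < θ) (hθ1 : θ < 1) (hS0 : 0 < S) (hS1 : S < 1) {k y : ℝ}
    (hk : k ∈ Ioc S (Khat θ S)) (h : T θ S k = |y|) : KK θ S y = k :=
  (T_strictAntiOn hθ0 hθ1 hS0 hS1).injOn (KK_mem hθ0 hθ1 hS0 hS1 y) hk
    (by rw [T_KK hθ0 hθ1 hS0 hS1, h])

lemma KK_zero (hθ0 : 0 < θ) (hθ1 : θ < 1) (hS0 : 0 < S) (hS1 : S < 1) :
    KK θ S 0 = Khat θ S := by
  refine KK_eq hθ0 hθ1 hS0 hS1 ⟨S_lt_Khat hθ0 hθ1 hS0 hS1, le_rfl⟩ ?_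
  rw [T_Khat, abs_zero]

lemma KK_lt_Khat (hθ0 : 0 < θ) (hθ1 : θ < 1) (hS0 : 0 < S) (hS1 : S < 1) {y : ℝ}
    (hy : y ≠ 0) : KK θ S y < Khat θ S := by
  rcases lt_or_eq_of_le (KK_mem hθ0 hθ1 hS0 hS1 y).2 with h | h
  · exact h
  · exfalso
    have h1 := T_KK hθ0 hθ1 hS0 hS1 y
    rw [h, T_Khat] at h1
    exact hy (abs_eq_zero.mp h1.symm)

lemma KK_gt (hθ0 : 0 < θ) (hθ1 : θ < 1) (hS0 : 0 < S) (hS1 : S < 1) {y k : ℝ}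
    (hk : k ∈ Ioc S (Khat θ S)) (h : |y| < T θ S k) : k < KK θ S y := by
  by_contra hcon
  push_neg at hcon
  rcases lt_or_eq_of_le hcon with hlt | heq
  · have := T_strictAntiOn hθ0 hθ1 hS0 hS1 (KK_mem hθ0 hθ1 hS0 hS1 y) hk hlt
    rw [T_KK hθ0 hθ1 hS0 hS1] at this
    linarith
  · rw [← heq, T_KK hθ0 hθ1 hS0 hS1] at h
    exact lt_irrefl _ h

lemma KK_lt (hθ0 : 0 < θ) (hθ1 : θ < 1) (hS0 : 0 < S) (hS1 : S < 1) {y k : ℝ}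
    (hk : k ∈ Ioc S (Khat θ S)) (h : T θ S k < |y|) : KK θ S y < k := by
  by_contra hcon
  push_neg at hcon
  rcases lt_or_eq_of_le hcon with hlt | heq
  · have := T_strictAntiOn hθ0 hθ1 hS0 hS1 hk (KK_mem hθ0 hθ1 hS0 hS1 y) hlt
    rw [T_KK hθ0 hθ1 hS0 hS1] at this
    linarith
  · rw [heq, T_KK hθ0 hθ1 hS0 hS1] at h
    exact lt_irrefl _ h

lemma continuous_KK (hθ0 : 0 < θ) (hθ1 : θ < 1) (hS0 : 0 < S) (hS1 : S < 1) :
    Continuous (KK θ S) := by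
  rw [continuous_iff_continuousAt]
  intro y₀
  have hSk : S < Khat θ S := S_lt_Khat hθ0 hθ1 hS0 hS1
  rw [Metric.continuousAt_iff]
  intro ε hε
  rcases eq_or_ne y₀ 0 with rfl | hy₀
  · -- continuity at 0
    set ε' := min (ε/2) ((Khat θ S - S)/2) with hε'_def
    have hε'0 : 0 < ε' := lt_min (by linarith) (by linarith)
    have hε'1 : ε' ≤ ε/2 := min_le_left _ _
    have hε'2 : ε' ≤ (Khat θ S - S)/2 := min_le_right _ _
    have hmem : Khat θ S - ε' ∈ Ioc S (Khat θ S) := ⟨by linarith, by linarith⟩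
    have hδ0 : 0 < T θ S (Khat θ S - ε') :=
      T_pos hθ0 hθ1 hS0 hS1 hmem.1 (by linarith)
    refine ⟨T θ S (Khat θ S - ε'), hδ0, ?_⟩
    intro y hy
    rw [Real.dist_eq, sub_zero] at hy
    have h1 : Khat θ S - ε' < KK θ S y := KK_gt hθ0 hθ1 hS0 hS1 hmem hy
    have h2 : KK θ S y ≤ Khat θ S := (KK_mem hθ0 hθ1 hS0 hS1 y).2
    rw [Real.dist_eq, KK_zero hθ0 hθ1 hS0 hS1, abs_lt]
    constructor <;> [linarith; linarith]
  · -- continuity at y₀ ≠ 0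
    set k₀ := KK θ S y₀ with hk₀_def
    have hk₀mem := KK_mem hθ0 hθ1 hS0 hS1 y₀
    have hk₀lt : k₀ < Khat θ S := KK_lt_Khat hθ0 hθ1 hS0 hS1 hy₀
    have hTk₀ : T θ S k₀ = |y₀| := T_KK hθ0 hθ1 hS0 hS1 y₀
    set ε' := min (ε/2) (min ((k₀ - S)/2) ((Khat θ S - k₀)/2)) with hε'_def
    have hε'0 : 0 < ε' :=
      lt_min (by linarith) (lt_min (by linarith [hk₀mem.1]) (by linarith))
    have hε'1 : ε' ≤ ε/2 := min_le_left _ _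
    have hε'2 : ε' ≤ (k₀ - S)/2 := le_trans (min_le_right _ _) (min_le_left _ _)
    have hε'3 : ε' ≤ (Khat θ S - k₀)/2 := le_trans (min_le_right _ _) (min_le_right _ _)
    have hkm : k₀ - ε' ∈ Ioc S (Khat θ S) := ⟨by linarith [hk₀mem.1], by linarith⟩
    have hkp : k₀ + ε' ∈ Ioc S (Khat θ S) := ⟨by linarith [hk₀mem.1], by linarith⟩
    have hyp : |y₀| < T θ S (k₀ - ε') := by
      have := T_strictAntiOn hθ0 hθ1 hS0 hS1 hkm hk₀mem (by linarith)
      rw [hTk₀] at this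
      exact this
    have hym : T θ S (k₀ + ε') < |y₀| := by
      have := T_strictAntiOn hθ0 hθ1 hS0 hS1 hk₀mem hkp (by linarith)
      rw [hTk₀] at this
      exact this
    refine ⟨min (T θ S (k₀ - ε') - |y₀|) (|y₀| - T θ S (k₀ + ε')),
      lt_min (by linarith) (by linarith), ?_⟩
    intro y hy
    rw [Real.dist_eq] at hy
    have habs : |abs y - abs y₀| ≤ |y - y₀| := abs_abs_sub_abs_le_abs_sub y y₀
    have hy1 : |y| < T θ S (k₀ - ε') := by
      have h3 : |y - y₀| < T θ S (k₀ - ε') - |y₀| := lt_of_lt_of_le hy (min_le_left _ _)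
      have := abs_le.mp habs
      linarith [this.2]
    have hy2 : T θ S (k₀ + ε') < |y| := by
      have h3 : |y - y₀| < |y₀| - T θ S (k₀ + ε') := lt_of_lt_of_le hy (min_le_right _ _)
      have := abs_le.mp habs
      linarith [this.1]
    have h1 : k₀ - ε' < KK θ S y := KK_gt hθ0 hθ1 hS0 hS1 hkm hy1
    have h2 : KK θ S y < k₀ + ε' := KK_lt hθ0 hθ1 hS0 hS1 hkp hy2
    rw [Real.dist_eq, abs_lt]
    constructor <;> [linarith; linarith]

lemma hasDerivAt_T (hθ0 : 0 < θ) (hθ1 : θ < 1) (hS0 : 0 < S) (hS1 : S < 1) {k : ℝ}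
    (h1 : S < k) (h2 : k < Khat θ S) : HasDerivAt (T θ S) (-(G θ S k)) k :=
  intervalIntegral.integral_hasDerivAt_left
    (G_intervalIntegrable hθ0 hθ1 hS0 hS1 h1 h2.le)
    ⟨univ, univ_mem, ((measurable_G hθ0).aestronglyMeasurable).restrict⟩
    (continuousAt_G hθ0 hθ1 hS0 hS1 h1 h2)

noncomputable def Kd (θ S y : ℝ) : ℝ :=
  -(Real.sign y * Real.sqrt (2 * W θ S (KK θ S y)))

lemma Kd_zero (θ S : ℝ) : Kd θ S 0 = 0 := by
  rw [Kd, Real.sign_zero]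
  ring

lemma Kd_neg_arg (θ S y : ℝ) : Kd θ S (-y) = -Kd θ S y := by
  rw [Kd, Kd, Real.sign_neg, KK_even]
  ring

lemma hasDerivAt_KK_pos (hθ0 : 0 < θ) (hθ1 : θ < 1) (hS0 : 0 < S) (hS1 : S < 1) {y : ℝ}
    (hy : 0 < y) :
    HasDerivAt (KK θ S) (-(Real.sqrt (2 * W θ S (KK θ S y)))) y := by
  set k := KK θ S y with hk_def
  have hkmem := KK_mem hθ0 hθ1 hS0 hS1 y
  have hklt : k < Khat θ S := KK_lt_Khat hθ0 hθ1 hS0 hS1 (ne_of_gt hy)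
  have hT : HasDerivAt (T θ S) (-(G θ S k)) k := hasDerivAt_T hθ0 hθ1 hS0 hS1 hkmem.1 hklt
  have hGpos : 0 < G θ S k := G_pos hθ0 hθ1 hS0 hS1 hkmem.1 hklt
  have hne : -(G θ S k) ≠ 0 := by linarith
  have hfg : ∀ᶠ z in 𝓝 y, T θ S (KK θ S z) = z := by
    filter_upwards [Ioi_mem_nhds hy] with z hz
    rw [T_KK hθ0 hθ1 hS0 hS1, abs_of_pos hz]
  have h := HasDerivAt.of_local_left_inverse
    ((continuous_KK hθ0 hθ1 hS0 hS1).continuousAt) hT hne hfg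
  have hval : (-(G θ S k))⁻¹ = -(Real.sqrt (2 * W θ S k)) := by
    rw [G, inv_neg, inv_inv]
  rwa [hval] at h

lemma hasDerivAt_KK_neg (hθ0 : 0 < θ) (hθ1 : θ < 1) (hS0 : 0 < S) (hS1 : S < 1) {y : ℝ}
    (hy : y < 0) :
    HasDerivAt (KK θ S) (Real.sqrt (2 * W θ S (KK θ S y))) y := by
  have h := hasDerivAt_KK_pos hθ0 hθ1 hS0 hS1 (show 0 < -y by linarith)
  have h2 := h.comp y (hasDerivAt_neg y)
  have h3 : KK θ S ∘ Neg.neg = KK θ S := funext fun z => KK_even θ S z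
  rw [h3] at h2
  have h4 : -Real.sqrt (2 * W θ S (KK θ S (-y))) * -1
      = Real.sqrt (2 * W θ S (KK θ S y)) := by
    rw [KK_even]
    ring
  rwa [h4] at h2

lemma hasDerivAt_KK_ne (hθ0 : 0 < θ) (hθ1 : θ < 1) (hS0 : 0 < S) (hS1 : S < 1) {y : ℝ}
    (hy : y ≠ 0) : HasDerivAt (KK θ S) (Kd θ S y) y := by
  rcases hy.lt_or_gt with h | h
  · have := hasDerivAt_KK_neg hθ0 hθ1 hS0 hS1 h
    have hval : Kd θ S y = Real.sqrt (2 * W θ S (KK θ S y)) := by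
      rw [Kd, Real.sign_of_neg h]
      ring
    rwa [hval]
  · have := hasDerivAt_KK_pos hθ0 hθ1 hS0 hS1 h
    have hval : Kd θ S y = -(Real.sqrt (2 * W θ S (KK θ S y))) := by
      rw [Kd, Real.sign_of_pos h]
      ring
    rwa [hval]

lemma abs_sign_le (y : ℝ) : |Real.sign y| ≤ 1 := by
  rcases lt_trichotomy y 0 with h | h | h
  · rw [Real.sign_of_neg h]; norm_num
  · rw [h, Real.sign_zero]; norm_num
  · rw [Real.sign_of_pos h]; norm_num

lemma continuous_sqrtWKK (hθ0 : 0 < θ) (hθ1 : θ < 1) (hS0 : 0 < S) (hS1 : S < 1) :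
    Continuous (fun y => Real.sqrt (2 * W θ S (KK θ S y))) :=
  Real.continuous_sqrt.comp (continuous_const.mul
    ((continuous_W S hθ0).comp (continuous_KK hθ0 hθ1 hS0 hS1)))

lemma continuousAt_Kd_zero (hθ0 : 0 < θ) (hθ1 : θ < 1) (hS0 : 0 < S) (hS1 : S < 1) :
    ContinuousAt (Kd θ S) 0 := by
  rw [ContinuousAt, Kd_zero]
  have hlim : Tendsto (fun y => Real.sqrt (2 * W θ S (KK θ S y))) (𝓝 0) (𝓝 0) := by
    have h := (continuous_sqrtWKK hθ0 hθ1 hS0 hS1).tendsto 0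
    have h0 : Real.sqrt (2 * W θ S (KK θ S 0)) = 0 := by
      rw [KK_zero hθ0 hθ1 hS0 hS1, W_Khat hθ0 hθ1 hS0 hS1]
      simp
    rwa [h0] at h
  refine squeeze_zero_norm (fun y => ?_) hlim
  rw [Kd, norm_neg, Real.norm_eq_abs, abs_mul]
  calc |Real.sign y| * |Real.sqrt (2 * W θ S (KK θ S y))|
      ≤ 1 * |Real.sqrt (2 * W θ S (KK θ S y))| :=
        mul_le_mul_of_nonneg_right (abs_sign_le y) (abs_nonneg _)
    _ = Real.sqrt (2 * W θ S (KK θ S y)) := by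
        rw [one_mul, abs_of_nonneg (Real.sqrt_nonneg _)]

lemma hasDerivAt_KK (hθ0 : 0 < θ) (hθ1 : θ < 1) (hS0 : 0 < S) (hS1 : S < 1) (y : ℝ) :
    HasDerivAt (KK θ S) (Kd θ S y) y := by
  rcases eq_or_ne y 0 with rfl | hy
  · exact hasDerivAt_of_hasDerivAt_of_ne
      (fun z hz => hasDerivAt_KK_ne hθ0 hθ1 hS0 hS1 hz)
      ((continuous_KK hθ0 hθ1 hS0 hS1).continuousAt)
      (continuousAt_Kd_zero hθ0 hθ1 hS0 hS1)
  · exact hasDerivAt_KK_ne hθ0 hθ1 hS0 hS1 hy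

lemma deriv_KK (hθ0 : 0 < θ) (hθ1 : θ < 1) (hS0 : 0 < S) (hS1 : S < 1) :
    deriv (KK θ S) = Kd θ S :=
  funext fun y => (hasDerivAt_KK hθ0 hθ1 hS0 hS1 y).deriv

lemma hasDerivAt_Kd_ne (hθ0 : 0 < θ) (hθ1 : θ < 1) (hS0 : 0 < S) (hS1 : S < 1) {y : ℝ}
    (hy : y ≠ 0) : HasDerivAt (Kd θ S) (fn θ S (KK θ S y)) y := by
  set k := KK θ S y with hk_def
  have hkmem := KK_mem hθ0 hθ1 hS0 hS1 y
  have hklt : k < Khat θ S := KK_lt_Khat hθ0 hθ1 hS0 hS1 hy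
  have hWpos : 0 < W θ S k := W_pos_of_lt_Khat hθ0 hθ1 hS0 hS1 hkmem.1 hklt
  have hs : 0 < Real.sqrt (2 * W θ S k) := Real.sqrt_pos.mpr (by linarith)
  have hsq : HasDerivAt Real.sqrt (1 / (2 * Real.sqrt (2 * W θ S k))) (2 * W θ S k) :=
    Real.hasDerivAt_sqrt (by positivity)
  have hW : HasDerivAt (W θ S) (fn θ S k) k := hasDerivAt_W S hθ0 k
  have hKK : HasDerivAt (KK θ S) (Kd θ S y) y := hasDerivAt_KK hθ0 hθ1 hS0 hS1 y
  have hinner : HasDerivAt (fun z => 2 * W θ S (KK θ S z)) (2 * (fn θ S k * Kd θ S y)) y := by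
    have := ((hW.comp y hKK)).const_mul 2; exact this
  have hcomp : HasDerivAt (fun z => Real.sqrt (2 * W θ S (KK θ S z)))
      (1 / (2 * Real.sqrt (2 * W θ S k)) * (2 * (fn θ S k * Kd θ S y))) y :=
    hsq.comp y hinner
  rcases hy.lt_or_gt with h | h
  · -- y < 0 : Kd = +sqrt near y
    have heq : Kd θ S =ᶠ[𝓝 y] (fun z => Real.sqrt (2 * W θ S (KK θ S z))) := by
      filter_upwards [Iio_mem_nhds h] with z hz
      rw [Kd, Real.sign_of_neg hz]
      ring
    have hKd_val : Kd θ S y = Real.sqrt (2 * W θ S (KK θ S y)) := by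
      rw [Kd, Real.sign_of_neg h]; ring
    have hval : 1 / (2 * Real.sqrt (2 * W θ S k)) * (2 * (fn θ S k * Kd θ S y))
        = fn θ S k := by
      rw [hKd_val, ← hk_def]
      field_simp
    rw [hval] at hcomp
    exact (heq.hasDerivAt_iff).mpr hcomp
  · -- 0 < y : Kd = -sqrt near y
    have heq : Kd θ S =ᶠ[𝓝 y] (fun z => -Real.sqrt (2 * W θ S (KK θ S z))) := by
      filter_upwards [Ioi_mem_nhds h] with z hz
      rw [Kd, Real.sign_of_pos hz]
      ring
    have hKd_val : Kd θ S y = -Real.sqrt (2 * W θ S (KK θ S y)) := by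
      rw [Kd, Real.sign_of_pos h]; ring
    have hval : -(1 / (2 * Real.sqrt (2 * W θ S k)) * (2 * (fn θ S k * Kd θ S y)))
        = fn θ S k := by
      rw [hKd_val, ← hk_def]
      field_simp
    rw [show fn θ S (KK θ S y) = fn θ S k from rfl]
    rw [← hval]
    exact (heq.hasDerivAt_iff).mpr hcomp.neg

lemma hasDerivAt_Kd (hθ0 : 0 < θ) (hθ1 : θ < 1) (hS0 : 0 < S) (hS1 : S < 1) (y : ℝ) :
    HasDerivAt (Kd θ S) (fn θ S (KK θ S y)) y := by
  rcases eq_or_ne y 0 with rfl | hy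
  · refine hasDerivAt_of_hasDerivAt_of_ne
      (fun z hz => hasDerivAt_Kd_ne hθ0 hθ1 hS0 hS1 hz)
      (continuousAt_Kd_zero hθ0 hθ1 hS0 hS1) ?_
    exact ((continuous_fn S hθ0).comp (continuous_KK hθ0 hθ1 hS0 hS1)).continuousAt
  · exact hasDerivAt_Kd_ne hθ0 hθ1 hS0 hS1 hy

lemma tendsto_KK_atTop (hθ0 : 0 < θ) (hθ1 : θ < 1) (hS0 : 0 < S) (hS1 : S < 1) :
    Tendsto (KK θ S) atTop (𝓝 S) := by
  rw [Metric.tendsto_atTop]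
  intro ε hε
  have hSk : S < Khat θ S := S_lt_Khat hθ0 hθ1 hS0 hS1
  set k₁ := min (S + ε/2) ((S + Khat θ S)/2) with hk₁_def
  have hk₁S : S < k₁ := lt_min (by linarith) (by linarith)
  have hk₁K : k₁ < Khat θ S := lt_of_le_of_lt (min_le_right _ _) (by linarith)
  have hmem : k₁ ∈ Ioc S (Khat θ S) := ⟨hk₁S, hk₁K.le⟩
  refine ⟨T θ S k₁, fun y hy => ?_⟩
  have h1 : KK θ S y ≤ k₁ := by
    by_contra hcon
    push_neg at hcon
    have := T_strictAntiOn hθ0 hθ1 hS0 hS1 hmem (KK_mem hθ0 hθ1 hS0 hS1 y) hcon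
    rw [T_KK hθ0 hθ1 hS0 hS1] at this
    linarith [le_abs_self y]
  have h2 : S < KK θ S y := (KK_mem hθ0 hθ1 hS0 hS1 y).1
  have h3 : k₁ ≤ S + ε/2 := min_le_left _ _
  rw [Real.dist_eq, abs_lt]
  constructor <;> [linarith; linarith]

lemma tendsto_KK_atBot (hθ0 : 0 < θ) (hθ1 : θ < 1) (hS0 : 0 < S) (hS1 : S < 1) :
    Tendsto (KK θ S) atBot (𝓝 S) := by
  have h := (tendsto_KK_atTop hθ0 hθ1 hS0 hS1).comp tendsto_neg_atBot_atTop
  have h3 : KK θ S ∘ Neg.neg = KK θ S := funext fun z => KK_even θ S z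
  rwa [h3] at h

lemma tendsto_Kd_atTop (hθ0 : 0 < θ) (hθ1 : θ < 1) (hS0 : 0 < S) (hS1 : S < 1) :
    Tendsto (Kd θ S) atTop (𝓝 0) := by
  have hWS : W θ S S = 0 := by rw [W_eq]; exact intervalIntegral.integral_same
  have hc : Tendsto (fun k => Real.sqrt (2 * W θ S k)) (𝓝 S) (𝓝 0) := by
    have hcc : Continuous (fun k : ℝ => Real.sqrt (2 * W θ S k)) :=
      Real.continuous_sqrt.comp (continuous_const.mul (continuous_W S hθ0))
    have h := hcc.tendsto S
    have h0 : Real.sqrt (2 * W θ S S) = 0 := by rw [hWS]; simp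
    rwa [h0] at h
  have hlim : Tendsto (fun y => Real.sqrt (2 * W θ S (KK θ S y))) atTop (𝓝 0) :=
    hc.comp (tendsto_KK_atTop hθ0 hθ1 hS0 hS1)
  refine squeeze_zero_norm (fun y => ?_) hlim
  rw [Kd, norm_neg, Real.norm_eq_abs, abs_mul]
  calc |Real.sign y| * |Real.sqrt (2 * W θ S (KK θ S y))|
      ≤ 1 * |Real.sqrt (2 * W θ S (KK θ S y))| :=
        mul_le_mul_of_nonneg_right (abs_sign_le y) (abs_nonneg _)
    _ = Real.sqrt (2 * W θ S (KK θ S y)) := by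
        rw [one_mul, abs_of_nonneg (Real.sqrt_nonneg _)]

lemma tendsto_Kd_atBot (hθ0 : 0 < θ) (hθ1 : θ < 1) (hS0 : 0 < S) (hS1 : S < 1) :
    Tendsto (Kd θ S) atBot (𝓝 0) := by
  have h := ((tendsto_Kd_atTop hθ0 hθ1 hS0 hS1).comp tendsto_neg_atBot_atTop).neg
  have h3 : (fun y => -((Kd θ S ∘ Neg.neg) y)) = Kd θ S := by
    funext z
    simp only [Function.comp_apply, Kd_neg_arg, neg_neg]
  rw [neg_zero] at h
  rwa [h3] at h

end CoreProfileAux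

open CoreProfileAux Set Topology Real MeasureTheory in
/-- Existence of a nonconstant even homoclinic (to `S`) solution of the core
profile equation `K'' - K + S^{1-θ} K^θ e^{(1-θ)(K-S)} = 0` for `0 < S < 1`. -/
theorem exists_core_profile_homoclinic (θ S : ℝ) (hθ : θ ∈ Set.Ioo (0 : ℝ) 1)
    (hS : S ∈ Set.Ioo (0 : ℝ) 1) :
    ∃ K : ℝ → ℝ, ContDiff ℝ 2 K ∧ (∃ y₁ y₂, K y₁ ≠ K y₂) ∧
      (∀ y, K (-y) = K y) ∧ (∀ y, 0 < K y) ∧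
      (∀ y, deriv (deriv K) y - K y
        + S ^ (1 - θ) * K y ^ θ * Real.exp ((1 - θ) * (K y - S)) = 0) ∧
      deriv K 0 = 0 ∧
      Tendsto K atTop (nhds S) ∧ Tendsto K atBot (nhds S) ∧
      Tendsto (deriv K) atTop (nhds 0) ∧ Tendsto (deriv K) atBot (nhds 0) := by
  obtain ⟨hθ0, hθ1⟩ := hθ
  obtain ⟨hS0, hS1⟩ := hS
  have hSk : S < Khat θ S := S_lt_Khat hθ0 hθ1 hS0 hS1
  have hdK : deriv (KK θ S) = Kd θ S := deriv_KK hθ0 hθ1 hS0 hS1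
  have hdd : deriv (deriv (KK θ S)) = fun y => fn θ S (KK θ S y) := by
    rw [hdK]
    exact funext fun y => (hasDerivAt_Kd hθ0 hθ1 hS0 hS1 y).deriv
  refine ⟨KK θ S, ?_, ?_, ?_, ?_, ?_, ?_, ?_, ?_, ?_, ?_⟩
  · -- ContDiff
    rw [show (2 : WithTop ℕ∞) = 1 + 1 from rfl, contDiff_succ_iff_deriv]
    refine ⟨fun y => (hasDerivAt_KK hθ0 hθ1 hS0 hS1 y).differentiableAt, by simp, ?_⟩
    rw [contDiff_one_iff_deriv, hdK]
    constructor
    · exact fun y => (hasDerivAt_Kd hθ0 hθ1 hS0 hS1 y).differentiableAt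
    · have : deriv (Kd θ S) = fun y => fn θ S (KK θ S y) :=
        funext fun y => (hasDerivAt_Kd hθ0 hθ1 hS0 hS1 y).deriv
      rw [this]
      exact (continuous_fn S hθ0).comp (continuous_KK hθ0 hθ1 hS0 hS1)
  · -- nonconstant
    set mid := (S + Khat θ S)/2 with hmid
    have hmmem : mid ∈ Ioc S (Khat θ S) := ⟨by simp only [hmid]; linarith,
      by simp only [hmid]; linarith⟩
    have hTnn : 0 ≤ T θ S mid := T_nonneg hθ0 hθ1 hS0 hS1 hmmem.1 hmmem.2
    have h1 : KK θ S 0 = Khat θ S := KK_zero hθ0 hθ1 hS0 hS1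
    have h2 : KK θ S (T θ S mid) = mid :=
      KK_eq hθ0 hθ1 hS0 hS1 hmmem (by rw [abs_of_nonneg hTnn])
    refine ⟨0, T θ S mid, ?_⟩
    rw [h1, h2]
    intro hcon
    rw [hmid] at hcon
    linarith
  · exact KK_even θ S
  · exact fun y => lt_trans hS0 (KK_mem hθ0 hθ1 hS0 hS1 y).1
  · intro y
    rw [hdd]
    simp only []
    rw [fn_def]
    ring
  · rw [hdK]
    exact Kd_zero θ S
  · exact tendsto_KK_atTop hθ0 hθ1 hS0 hS1
  · exact tendsto_KK_atBot hθ0 hθ1 hS0 hS1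
  · rw [hdK]
    exact tendsto_Kd_atTop hθ0 hθ1 hS0 hS1
  · rw [hdK]
    exact tendsto_Kd_atBot hθ0 hθ1 hS0 hS1
end

section
/- Let θ ∈ (0,1), S > 0, let K0 : ℝ → ℝ be three times continuously differentiable, positive, solving the core profile equation K0'' − K0 + S^{1−θ} K0^θ e^{(1−θ)(K0−S)} = 0 on ℝ, with K0(y) → S and K0'(y) → 0 as y → +∞, and set L0 := S e^{K0 − S}. Define Q := K0' and P(y) := ((1−θ)/2) ∫_0^y (1/L0(z)) (K0'(z)² − (K0(z)² − S²)) dz. Then (P, Q) lies in the kernel of the adjoint of the linearized operator; explicitly, P'' + K0' P' + (1−θ) K0^θ L0^{−θ} Q = 0 and Q'' − Q + θ K0^{θ−1} L0^{1−θ} Q − L0' P' − L0 P'' = 0 on ℝ. -/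
open Filter

/-- The pair `(P, Q)` with `Q = K0'` and
`P(y) = ((1-θ)/2) ∫_0^y (1/L0)(K0'² - (K0² - S²)) dz`
lies in the kernel of the adjoint of the linearized inner operator. -/
theorem adjoint_kernel_element (θ S : ℝ) (hθ : θ ∈ Set.Ioo (0 : ℝ) 1)
    (hS : 0 < S) (K0 : ℝ → ℝ) (hK0 : ContDiff ℝ 3 K0) (hK0pos : ∀ y, 0 < K0 y)
    (heq : ∀ y, deriv (deriv K0) y - K0 y
      + S ^ (1 - θ) * K0 y ^ θ * Real.exp ((1 - θ) * (K0 y - S)) = 0)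
    (hKS : Tendsto K0 atTop (nhds S))
    (hK' : Tendsto (deriv K0) atTop (nhds 0))
    (L0 : ℝ → ℝ) (hL0 : ∀ y, L0 y = S * Real.exp (K0 y - S))
    (P : ℝ → ℝ)
    (hP : ∀ y, P y = (1 - θ) / 2
      * ∫ z in (0 : ℝ)..y, (1 / L0 z) * (deriv K0 z ^ 2 - (K0 z ^ 2 - S ^ 2))) :
    ∀ y,
      (deriv (deriv P) y + deriv K0 y * deriv P y
        + (1 - θ) * K0 y ^ θ * L0 y ^ (-θ) * deriv K0 y = 0) ∧
      (deriv (deriv (deriv K0)) y - deriv K0 y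
        + θ * K0 y ^ (θ - 1) * L0 y ^ (1 - θ) * deriv K0 y
        - deriv L0 y * deriv P y - L0 y * deriv (deriv P) y = 0) := by
  obtain ⟨hθ0, hθ1⟩ := hθ
  have h3 : ContDiff ℝ ((2 : ℕ) + 1) K0 := by exact_mod_cast hK0
  have hK0d : Differentiable ℝ K0 := (contDiff_succ_iff_deriv.mp h3).1
  have hdK2 : ContDiff ℝ (2 : ℕ) (deriv K0) := (contDiff_succ_iff_deriv.mp h3).2.2
  have hdKd : Differentiable ℝ (deriv K0) :=
    hdK2.differentiable (by norm_num)
  have hK1 : ∀ y, HasDerivAt K0 (deriv K0 y) y := fun y => (hK0d y).hasDerivAt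
  have hK2 : ∀ y, HasDerivAt (deriv K0) (deriv (deriv K0) y) y :=
    fun y => (hdKd y).hasDerivAt
  -- L0 facts
  have hL0pos : ∀ y, 0 < L0 y := fun y => by
    rw [hL0 y]; positivity
  have hL0ne : ∀ y, L0 y ≠ 0 := fun y => (hL0pos y).ne'
  have hL0fun : L0 = fun y => S * Real.exp (K0 y - S) := funext hL0
  have hL0deriv : ∀ y, HasDerivAt L0 (L0 y * deriv K0 y) y := by
    intro y
    have h := (((hK1 y).sub_const S).exp).const_mul S
    rw [← hL0fun] at h
    refine h.congr_deriv ?_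
    rw [hL0 y]; ring
  have hL0cont : Continuous L0 := by
    rw [hL0fun]; exact (continuous_const.mul ((hK0d.continuous.sub continuous_const).rexp))
  -- key rpow identity
  have hLpow : ∀ y, S ^ (1 - θ) * Real.exp ((1 - θ) * (K0 y - S)) = L0 y ^ (1 - θ) := by
    intro y
    rw [hL0 y, Real.mul_rpow hS.le (Real.exp_pos _).le, ← Real.exp_mul, mul_comm (K0 y - S)]
  -- the profile equation in rpow form
  have hK2eq : ∀ y, deriv (deriv K0) y = K0 y - K0 y ^ θ * L0 y ^ (1 - θ) := by
    intro y
    have hkey : S ^ (1 - θ) * K0 y ^ θ * Real.exp ((1 - θ) * (K0 y - S))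
        = K0 y ^ θ * L0 y ^ (1 - θ) := by rw [← hLpow y]; ring
    have h := heq y
    rw [hkey] at h
    linarith
  -- the integrand
  set F : ℝ → ℝ := fun z => (1 / L0 z) * (deriv K0 z ^ 2 - (K0 z ^ 2 - S ^ 2)) with hF
  have hFcont : Continuous F := by
    apply Continuous.mul
    · exact continuous_const.div hL0cont hL0ne
    · exact ((hdKd.continuous.pow 2).sub ((hK0d.continuous.pow 2).sub continuous_const))
  have hPfun : P = fun y => (1 - θ) / 2 * ∫ z in (0 : ℝ)..y, F z := funext hP
  have hPder : ∀ y, HasDerivAt P ((1 - θ) / 2 * F y) y := by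
    intro y
    rw [hPfun]
    exact (intervalIntegral.integral_hasDerivAt_right
      (hFcont.intervalIntegrable _ _)
      (hFcont.stronglyMeasurableAtFilter _ _)
      hFcont.continuousAt).const_mul _
  have hP' : deriv P = fun y => (1 - θ) / 2 * F y := funext fun y => (hPder y).deriv
  -- derivative of F
  have hFder : ∀ y, HasDerivAt F
      (((2 * deriv K0 y * deriv (deriv K0) y - 2 * K0 y * deriv K0 y) * L0 y
        - (deriv K0 y ^ 2 - (K0 y ^ 2 - S ^ 2)) * (L0 y * deriv K0 y)) / L0 y ^ 2) y := by
    intro y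
    have hg : HasDerivAt (fun z => deriv K0 z ^ 2 - (K0 z ^ 2 - S ^ 2))
        (2 * deriv K0 y * deriv (deriv K0) y - 2 * K0 y * deriv K0 y) y := by
      have := (((hK2 y).pow 2).sub (((hK1 y).pow 2).sub_const (S ^ 2)))
      refine this.congr_deriv ?_; ring
    have := hg.div (hL0deriv y) (hL0ne y)
    have hFe : F = (fun z => deriv K0 z ^ 2 - (K0 z ^ 2 - S ^ 2)) / L0 := by
      funext z; rw [hF]; simp only [Pi.div_apply]; ring
    rw [hFe]; exact this
  have hP'' : ∀ y, deriv (deriv P) y = (1 - θ) / 2 *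
      (((2 * deriv K0 y * deriv (deriv K0) y - 2 * K0 y * deriv K0 y) * L0 y
        - (deriv K0 y ^ 2 - (K0 y ^ 2 - S ^ 2)) * (L0 y * deriv K0 y)) / L0 y ^ 2) := by
    intro y
    rw [hP']
    exact (((hFder y).const_mul _)).deriv
  -- third derivative of K0
  have hK2fun : deriv (deriv K0) = fun y => K0 y - K0 y ^ θ * L0 y ^ (1 - θ) :=
    funext hK2eq
  have hK3 : ∀ y, deriv (deriv (deriv K0)) y =
      deriv K0 y - (θ * K0 y ^ (θ - 1) * deriv K0 y * L0 y ^ (1 - θ)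
        + K0 y ^ θ * ((1 - θ) * L0 y ^ (-θ) * (L0 y * deriv K0 y))) := by
    intro y
    rw [hK2fun]
    have ha : HasDerivAt (fun y => K0 y ^ θ) (θ * K0 y ^ (θ - 1) * deriv K0 y) y := by
      have := (hK1 y).rpow_const (p := θ) (Or.inl (hK0pos y).ne')
      convert this using 1; ring
    have hb : HasDerivAt (fun y => L0 y ^ (1 - θ))
        ((1 - θ) * L0 y ^ (-θ) * (L0 y * deriv K0 y)) y := by
      have := (hL0deriv y).rpow_const (p := 1 - θ) (Or.inl (hL0ne y))
      convert this using 1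
      rw [show (1 - θ - 1 : ℝ) = -θ by ring]
      ring
    exact ((hK1 y).sub (ha.mul hb)).deriv
  -- negative power relation
  have hLneg : ∀ y, L0 y ^ (-θ) = L0 y ^ (1 - θ) / L0 y := by
    intro y
    rw [show (-θ) = (1 - θ) - 1 by ring, Real.rpow_sub (hL0pos y), Real.rpow_one]
  intro y
  have hDL : deriv L0 y = L0 y * deriv K0 y := (hL0deriv y).deriv
  constructor
  · rw [hP'', hP', hF, hK2eq y, hLneg y]
    have l := hL0ne y
    field_simp
    ring
  · rw [hK3, hP'', hP', hF, hDL, hK2eq y, hLneg y]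
    have l := hL0ne y
    field_simp
    ring
end

section
/- Let P, Q, K0, L0 : ℝ → ℝ with P, Q twice continuously differentiable, K0 continuously differentiable, L0 continuously differentiable and positive with L0' = L0 K0', θ ∈ (0,1), and suppose P'' + K0' P' + (1−θ) K0^θ L0^{−θ} Q = 0 and Q'' − Q + θ K0^{θ−1} L0^{1−θ} Q − L0' P' − L0 P'' = 0 on ℝ (with K0 > 0). Then Q satisfies the decoupled equation Q'' − Q + θ K0^{θ−1} L0^{1−θ} Q + (1−θ) K0^θ L0^{1−θ} Q = 0 on ℝ. -/
/-- Elimination step in the adjoint system: multiplying the `P`-equation by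
`L0` and adding the `Q`-equation, using `L0' = L0 K0'`, yields a closed
second-order equation for `Q`. -/
theorem adjoint_elimination (θ : ℝ) (hθ : θ ∈ Set.Ioo (0 : ℝ) 1)
    (P Q K0 L0 : ℝ → ℝ)
    (hP : ContDiff ℝ 2 P) (hQ : ContDiff ℝ 2 Q)
    (hK0 : ContDiff ℝ 1 K0) (hL0 : ContDiff ℝ 1 L0)
    (hL0pos : ∀ y, 0 < L0 y) (hK0pos : ∀ y, 0 < K0 y)
    (hslave : ∀ y, deriv L0 y = L0 y * deriv K0 y)
    (heqP : ∀ y, deriv (deriv P) y + deriv K0 y * deriv P y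
      + (1 - θ) * K0 y ^ θ * L0 y ^ (-θ) * Q y = 0)
    (heqQ : ∀ y, deriv (deriv Q) y - Q y
      + θ * K0 y ^ (θ - 1) * L0 y ^ (1 - θ) * Q y
      - deriv L0 y * deriv P y - L0 y * deriv (deriv P) y = 0) :
    ∀ y, deriv (deriv Q) y - Q y
      + θ * K0 y ^ (θ - 1) * L0 y ^ (1 - θ) * Q y
      + (1 - θ) * K0 y ^ θ * L0 y ^ (1 - θ) * Q y = 0 := by
  intro y
  have hid : L0 y * L0 y ^ (-θ) = L0 y ^ (1 - θ) := by
    rw [show (1:ℝ) - θ = -θ + 1 by ring, Real.rpow_add (hL0pos y),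
      Real.rpow_one, mul_comm]
  linear_combination heqQ y + L0 y * heqP y + deriv P y * hslave y
    - (1 - θ) * K0 y ^ θ * Q y * hid
end

section
/- Let θ ∈ (0,1), S > 0, let K0 : ℝ → ℝ be twice continuously differentiable, positive, solving the core profile equation K0'' − K0 + S^{1−θ} K0^θ e^{(1−θ)(K0−S)} = 0 on ℝ, with K0(y) → S and K0'(y) → 0 as y → +∞, and suppose K0'(z) < 0 for all z > 0. Set L0 := S e^{K0 − S}. Then K0'(z)² < K0(z)² − S² for every z > 0, and consequently P(y) := ((1−θ)/2) ∫_0^y (1/L0(z)) (K0'(z)² − (K0(z)² − S²)) dz < 0 for every y > 0. -/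
open Filter

/-- Negativity of the adjoint null eigenfunction component `P`: for the
decreasing homoclinic core profile, `K0'² < K0² - S²` on `(0,∞)`, hence
`P(y) < 0` for all `y > 0`. -/
theorem adjoint_component_negative (θ S : ℝ) (hθ : θ ∈ Set.Ioo (0 : ℝ) 1)
    (hS : 0 < S) (K0 : ℝ → ℝ) (hK0 : ContDiff ℝ 2 K0) (hK0pos : ∀ y, 0 < K0 y)
    (heq : ∀ y, deriv (deriv K0) y - K0 y
      + S ^ (1 - θ) * K0 y ^ θ * Real.exp ((1 - θ) * (K0 y - S)) = 0)
    (hKS : Tendsto K0 atTop (nhds S))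
    (hK' : Tendsto (deriv K0) atTop (nhds 0))
    (hKdec : ∀ z > (0 : ℝ), deriv K0 z < 0) :
    (∀ z > (0 : ℝ), deriv K0 z ^ 2 < K0 z ^ 2 - S ^ 2) ∧
    ∀ y > (0 : ℝ),
      (1 - θ) / 2 * ∫ z in (0 : ℝ)..y,
          (1 / (S * Real.exp (K0 z - S))) * (deriv K0 z ^ 2 - (K0 z ^ 2 - S ^ 2))
        < 0 := by
  obtain ⟨hθ0, hθ1⟩ := hθ
  have hK0' : ContDiff ℝ 1 (deriv K0) := by
    have := (contDiff_succ_iff_deriv (n := 1)).mp (by exact_mod_cast hK0)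
    exact this.2.2
  have hdK0 : Differentiable ℝ K0 := hK0.differentiable two_ne_zero
  have hdK0' : Differentiable ℝ (deriv K0) := hK0'.differentiable one_ne_zero
  have hcK : Continuous K0 := hK0.continuous
  have hcK' : Continuous (deriv K0) := hK0'.continuous
  have hcK'' : Continuous (deriv (deriv K0)) := hK0'.continuous_deriv le_rfl
  -- the energy-type function
  set g : ℝ → ℝ := fun y => deriv K0 y ^ 2 - K0 y ^ 2 + S ^ 2 with hg
  have hgd : ∀ y, HasDerivAt g
      (2 * deriv K0 y * deriv (deriv K0) y - 2 * K0 y * deriv K0 y) y := by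
    intro y
    have h1 : HasDerivAt (fun y => deriv K0 y ^ 2)
        (2 * deriv K0 y ^ 1 * deriv (deriv K0) y) y :=
      ((hdK0' y).hasDerivAt).pow 2
    have h2 : HasDerivAt (fun y => K0 y ^ 2) (2 * K0 y ^ 1 * deriv K0 y) y :=
      ((hdK0 y).hasDerivAt).pow 2
    have := (h1.sub h2).add_const (S ^ 2)
    simp only [pow_one] at this
    exact this
  have hgderiv : ∀ y, deriv g y
      = 2 * deriv K0 y * deriv (deriv K0) y - 2 * K0 y * deriv K0 y :=
    fun y => (hgd y).deriv
  have hgc : Continuous g := by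
    apply Continuous.add
    · exact (hcK'.pow 2).sub (hcK.pow 2)
    · exact continuous_const
  -- derivative of g is positive on (0,∞)
  have hgpos : ∀ x ∈ Set.Ioi (0 : ℝ), 0 < deriv g x := by
    intro x hx
    have hx0 : (0:ℝ) < x := hx
    have hterm : 0 < S ^ (1 - θ) * K0 x ^ θ * Real.exp ((1 - θ) * (K0 x - S)) := by
      have h1 : (0:ℝ) < S ^ (1 - θ) := Real.rpow_pos_of_pos hS _
      have h2 : (0:ℝ) < K0 x ^ θ := Real.rpow_pos_of_pos (hK0pos x) _
      positivity
    have heqx := heq x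
    have hKK : deriv (deriv K0) x - K0 x
        = -(S ^ (1 - θ) * K0 x ^ θ * Real.exp ((1 - θ) * (K0 x - S))) := by
      linarith
    have hK'x := hKdec x hx0
    rw [hgderiv x]
    have : 2 * deriv K0 x * deriv (deriv K0) x - 2 * K0 x * deriv K0 x
        = 2 * deriv K0 x * (deriv (deriv K0) x - K0 x) := by ring
    rw [this, hKK]
    have := mul_pos (mul_pos two_pos (neg_pos.mpr hK'x)) hterm
    nlinarith
  have hmono : StrictMonoOn g (Set.Ici (0 : ℝ)) := by
    apply strictMonoOn_of_deriv_pos (convex_Ici 0) (hgc.continuousOn)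
    intro x hx
    rw [interior_Ici] at hx
    exact hgpos x hx
  -- limit of g at +∞ is 0
  have hglim : Tendsto g atTop (nhds 0) := by
    have h1 : Tendsto (fun y => deriv K0 y ^ 2) atTop (nhds (0 ^ 2)) := hK'.pow 2
    have h2 : Tendsto (fun y => K0 y ^ 2) atTop (nhds (S ^ 2)) := hKS.pow 2
    have := (h1.sub h2).add_const (S ^ 2)
    simpa using this
  -- g ≤ 0 on (0,∞), in fact on [0,∞)
  have hgle : ∀ w ≥ (0:ℝ), g w ≤ 0 := by
    intro w hw
    refine ge_of_tendsto hglim ?_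
    filter_upwards [eventually_ge_atTop w] with t ht
    exact hmono.monotoneOn hw (le_trans hw ht) ht
  have hglt : ∀ z > (0:ℝ), g z < 0 := by
    intro z hz
    have h1 : g z < g (z + 1) :=
      hmono (Set.mem_Ici.mpr hz.le) (Set.mem_Ici.mpr (by linarith)) (by linarith)
    have h2 : g (z + 1) ≤ 0 := hgle _ (by linarith)
    linarith
  have part1 : ∀ z > (0 : ℝ), deriv K0 z ^ 2 < K0 z ^ 2 - S ^ 2 := by
    intro z hz
    have := hglt z hz
    simp only [hg] at this
    linarith
  refine ⟨part1, ?_⟩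
  intro y hy
  set f : ℝ → ℝ := fun z =>
    (1 / (S * Real.exp (K0 z - S))) * (deriv K0 z ^ 2 - (K0 z ^ 2 - S ^ 2)) with hf
  have hdenpos : ∀ z, 0 < S * Real.exp (K0 z - S) := fun z =>
    mul_pos hS (Real.exp_pos _)
  have hcf : Continuous f := by
    apply Continuous.mul
    · exact continuous_const.div
        (continuous_const.mul (Real.continuous_exp.comp (hcK.sub continuous_const)))
        (fun z => (hdenpos z).ne')
    · exact (hcK'.pow 2).sub ((hcK.pow 2).sub continuous_const)
  have hint : IntervalIntegrable f MeasureTheory.volume 0 y :=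
    hcf.intervalIntegrable 0 y
  have hpos : 0 < ∫ z in (0:ℝ)..y, -f z := by
    apply intervalIntegral.intervalIntegral_pos_of_pos_on
    · exact hint.neg
    · intro x hx
      have hx0 : (0:ℝ) < x := hx.1
      have h1 := part1 x hx0
      have := hdenpos x
      have : 0 < 1 / (S * Real.exp (K0 x - S)) := by positivity
      simp only [hf]
      nlinarith
    · exact hy
  have hneg : (∫ z in (0:ℝ)..y, f z) < 0 := by
    rw [intervalIntegral.integral_neg] at hpos
    linarith
  have hco : 0 < (1 - θ) / 2 := by linarith
  exact mul_neg_of_pos_of_neg hco hneg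
end

section
/- Let θ ∈ (0,1), S > 0, a, b > 0 with a b < π²/4. Let K0 : ℝ → ℝ be twice continuously differentiable, positive, solving the core profile equation K0'' − K0 + S^{1−θ} K0^θ e^{(1−θ)(K0−S)} = 0 on ℝ, with K0(y) → S and K0'(y) → 0 as y → +∞, K0'(z) < 0 for all z > 0, and set L0 := S e^{K0 − S}. Assume 0 < ∫_{−∞}^{∞} K0'(y)² dy < ∞ and that the function z ↦ (1/L0(z)) (K0'(z)² − (K0(z)² − S²)) is integrable on (0, ∞), with P(∞) := ((1−θ)/2) ∫_0^∞ (1/L0(z)) (K0'(z)² − (K0(z)² − S²)) dz. Then the small eigenvalue λ1 := 2 S a b P(∞) / (∫_{−∞}^{∞} K0'(y)² dy · cos²(√(ab))) is strictly negative. -/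
open Filter MeasureTheory

/-- The small (translational) eigenvalue
`lam1 = 2 S a b P(∞) / (∫ K0'² dy · cos²(√(ab)))` is strictly negative. -/
theorem small_eigenvalue_negative (θ S a b : ℝ) (hθ : θ ∈ Set.Ioo (0 : ℝ) 1)
    (hS : 0 < S) (ha : 0 < a) (hb : 0 < b) (hab : a * b < Real.pi ^ 2 / 4)
    (K0 : ℝ → ℝ) (hK0 : ContDiff ℝ 2 K0) (hK0pos : ∀ y, 0 < K0 y)
    (heq : ∀ y, deriv (deriv K0) y - K0 y
      + S ^ (1 - θ) * K0 y ^ θ * Real.exp ((1 - θ) * (K0 y - S)) = 0)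
    (hKS : Tendsto K0 atTop (nhds S))
    (hK' : Tendsto (deriv K0) atTop (nhds 0))
    (hKdec : ∀ z > (0 : ℝ), deriv K0 z < 0)
    (L0 : ℝ → ℝ) (hL0 : ∀ y, L0 y = S * Real.exp (K0 y - S))
    (hQint : Integrable (fun y => deriv K0 y ^ 2))
    (hQpos : 0 < ∫ y, deriv K0 y ^ 2)
    (hPint : IntegrableOn
      (fun z => (1 / L0 z) * (deriv K0 z ^ 2 - (K0 z ^ 2 - S ^ 2)))
      (Set.Ioi (0 : ℝ)))
    (Pinf lam1 : ℝ)
    (hPinf : Pinf = (1 - θ) / 2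
      * ∫ z in Set.Ioi (0 : ℝ),
          (1 / L0 z) * (deriv K0 z ^ 2 - (K0 z ^ 2 - S ^ 2)))
    (hlam1 : lam1 = 2 * S * a * b * Pinf
      / ((∫ y, deriv K0 y ^ 2) * Real.cos (Real.sqrt (a * b)) ^ 2)) :
    lam1 < 0 := by
  obtain ⟨hθ0, hθ1⟩ := hθ
  -- K0 and deriv K0 differentiability
  have hK0diff : Differentiable ℝ K0 := hK0.differentiable (by norm_num)
  have hK0' : ContDiff ℝ 1 (deriv K0) := (contDiff_succ_iff_deriv.mp hK0).2.2
  have hK0'diff : Differentiable ℝ (deriv K0) := hK0'.differentiable (by norm_num)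
  -- the energy E
  set E : ℝ → ℝ := fun z => deriv K0 z ^ 2 - K0 z ^ 2 + S ^ 2 with hE
  have hEderiv : ∀ z, HasDerivAt E
      (2 * deriv K0 z * (deriv (deriv K0) z - K0 z)) z := by
    intro z
    have h1 : HasDerivAt (fun x => deriv K0 x ^ 2)
        (2 * deriv K0 z * deriv (deriv K0) z) z := by
      have := ((hK0'diff z).hasDerivAt).fun_pow 2
      simpa [mul_comm, mul_assoc, mul_left_comm] using this
    have h2 : HasDerivAt (fun x => K0 x ^ 2) (2 * K0 z * deriv K0 z) z := by
      have := ((hK0diff z).hasDerivAt).fun_pow 2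
      simpa [mul_comm, mul_assoc, mul_left_comm] using this
    have := (h1.fun_sub h2).add_const (S ^ 2)
    exact this.congr_deriv (by ring)
  have hEcont : Continuous E := by
    fun_prop (disch := norm_num)
  -- E is strictly increasing on [0, ∞)
  have hEpos : ∀ z ∈ interior (Set.Ici (0:ℝ)), 0 < deriv E z := by
    intro z hz
    rw [interior_Ici] at hz
    have hz0 : (0:ℝ) < z := hz
    rw [(hEderiv z).deriv]
    have hrhs : deriv (deriv K0) z - K0 z
        = -(S ^ (1 - θ) * K0 z ^ θ * Real.exp ((1 - θ) * (K0 z - S))) := by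
      have := heq z; linarith
    rw [hrhs]
    have hterm : 0 < S ^ (1 - θ) * K0 z ^ θ * Real.exp ((1 - θ) * (K0 z - S)) := by
      have h1 : 0 < S ^ (1 - θ) := Real.rpow_pos_of_pos hS _
      have h2 : 0 < K0 z ^ θ := Real.rpow_pos_of_pos (hK0pos z) _
      positivity
    have := hKdec z hz0
    nlinarith
  have hEmono : StrictMonoOn E (Set.Ici (0:ℝ)) :=
    strictMonoOn_of_deriv_pos (convex_Ici 0) (hEcont.continuousOn) hEpos
  -- E tends to 0 at +∞
  have hE0 : Tendsto E atTop (nhds 0) := by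
    have : Tendsto E atTop (nhds (0 ^ 2 - S ^ 2 + S ^ 2)) :=
      ((hK'.pow 2).sub (hKS.pow 2)).add tendsto_const_nhds
    simpa using this
  -- E < 0 on (0, ∞)
  have hEneg : ∀ z > (0:ℝ), E z < 0 := by
    intro z hz
    have h1 : E z < E (z + 1) :=
      hEmono (Set.mem_Ici.mpr hz.le) (Set.mem_Ici.mpr (by linarith)) (by linarith)
    have h2 : E (z + 1) ≤ 0 := by
      refine ge_of_tendsto hE0 ?_
      filter_upwards [eventually_ge_atTop (z + 2)] with w hw
      exact (hEmono (Set.mem_Ici.mpr (by linarith)) (Set.mem_Ici.mpr (by linarith))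
        (by linarith)).le
    linarith
  -- the integrand is negative on (0, ∞)
  have hL0pos : ∀ y, 0 < L0 y := by
    intro y; rw [hL0]; positivity
  set f : ℝ → ℝ := fun z => (1 / L0 z) * (deriv K0 z ^ 2 - (K0 z ^ 2 - S ^ 2))
    with hf
  have hfneg : ∀ z ∈ Set.Ioi (0:ℝ), f z < 0 := by
    intro z hz
    have h1 : deriv K0 z ^ 2 - (K0 z ^ 2 - S ^ 2) = E z := by ring
    rw [hf]; dsimp only
    rw [h1]
    have := hEneg z hz
    have := hL0pos z
    have h2 : 0 < 1 / L0 z := by positivity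
    exact mul_neg_of_pos_of_neg h2 (hEneg z hz)
  -- hence the integral is negative
  have hIneg : (∫ z in Set.Ioi (0:ℝ), f z) < 0 := by
    have hnegint : IntegrableOn (fun z => -f z) (Set.Ioi (0:ℝ)) := hPint.neg
    have hpos : 0 < ∫ z in Set.Ioi (0:ℝ), -f z := by
      rw [setIntegral_pos_iff_support_of_nonneg_ae]
      · have hsub : Set.Ioi (0:ℝ) ⊆ Function.support (fun z => -f z) ∩ Set.Ioi 0 := by
          intro z hz
          refine ⟨?_, hz⟩
          simp only [Function.mem_support, neg_ne_zero]
          exact (hfneg z hz).ne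
        calc (0:ENNReal) < volume (Set.Ioi (0:ℝ)) := by simp
          _ ≤ _ := measure_mono hsub
      · filter_upwards [ae_restrict_mem measurableSet_Ioi] with z hz
        exact le_of_lt (by simpa using neg_pos.mpr (hfneg z hz))
      · exact hnegint
    have : (∫ z in Set.Ioi (0:ℝ), -f z) = -∫ z in Set.Ioi (0:ℝ), f z :=
      integral_neg f
    linarith
  have hPneg : Pinf < 0 := by
    rw [hPinf]
    have h1 : 0 < (1 - θ) / 2 := by linarith
    exact mul_neg_of_pos_of_neg h1 hIneg
  -- cosine positivity
  have hcos : 0 < Real.cos (Real.sqrt (a * b)) := by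
    apply Real.cos_pos_of_mem_Ioo
    constructor
    · have := Real.sqrt_nonneg (a * b)
      have := Real.pi_pos
      linarith
    · have h1 : Real.sqrt (a * b) < Real.sqrt (Real.pi ^ 2 / 4) :=
        Real.sqrt_lt_sqrt (by positivity) hab
      have h2 : Real.sqrt (Real.pi ^ 2 / 4) = Real.pi / 2 := by
        rw [show Real.pi ^ 2 / 4 = (Real.pi / 2) ^ 2 by ring]
        exact Real.sqrt_sq (by positivity)
      linarith
  rw [hlam1]
  apply div_neg_of_neg_of_pos
  · have : 0 < 2 * S * a * b := by positivity
    exact mul_neg_of_pos_of_neg this hPneg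
  · positivity
end

section
/- Let a, b > 0, x0 ∈ (−1, 1), S0 > 0, and assume cos(√(ab)(x0 − 1)) ≠ 0 and cos(√(ab)(x0 + 1)) ≠ 0. Define l : [−1, 1] → ℝ by l(x) = S0 cos(√(ab)(x − 1))/cos(√(ab)(x0 − 1)) for x0 ≤ x ≤ 1 and l(x) = S0 cos(√(ab)(x + 1))/cos(√(ab)(x0 + 1)) for −1 ≤ x ≤ x0. Then l is continuous, l(x0) = S0, l satisfies l'' + a b l = 0 on (x0, 1) and on (−1, x0), l'(1) = l'(−1) = 0, and the one-sided derivatives at x0 satisfy l'(x0⁺) − l'(x0⁻) = −S0 √(ab) ( tan(√(ab)(x0 − 1)) − tan(√(ab)(x0 + 1)) ). -/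
open Set

/-- Outer labor profile of a quasi-equilibrium spike located at `x0`. -/
noncomputable def spikeOuter (a b x0 S0 : ℝ) : ℝ → ℝ := fun x =>
  if x ≤ x0 then
    S0 * Real.cos (Real.sqrt (a * b) * (x + 1))
      / Real.cos (Real.sqrt (a * b) * (x0 + 1))
  else
    S0 * Real.cos (Real.sqrt (a * b) * (x - 1))
      / Real.cos (Real.sqrt (a * b) * (x0 - 1))

private lemma hdL (s S0 d : ℝ) (x : ℝ) :
    HasDerivAt (fun y : ℝ => S0 * Real.cos (s * (y + 1)) / d)
      (S0 * (-Real.sin (s * (x + 1)) * s) / d) x := by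
  have h1 : HasDerivAt (fun y : ℝ => s * (y + 1)) s x := by
    simpa using ((hasDerivAt_id x).add_const 1).const_mul s
  have h2 := (Real.hasDerivAt_cos (s * (x + 1))).comp x h1
  exact (h2.const_mul S0).div_const d

private lemma hdR (s S0 d : ℝ) (x : ℝ) :
    HasDerivAt (fun y : ℝ => S0 * Real.cos (s * (y - 1)) / d)
      (S0 * (-Real.sin (s * (x - 1)) * s) / d) x := by
  have h1 : HasDerivAt (fun y : ℝ => s * (y - 1)) s x := by
    simpa using ((hasDerivAt_id x).sub_const 1).const_mul s
  have h2 := (Real.hasDerivAt_cos (s * (x - 1))).comp x h1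
  exact (h2.const_mul S0).div_const d

private lemma hdL' (s S0 d : ℝ) (x : ℝ) :
    HasDerivAt (fun y : ℝ => S0 * (-Real.sin (s * (y + 1)) * s) / d)
      (S0 * (-(Real.cos (s * (x + 1)) * s) * s) / d) x := by
  have h1 : HasDerivAt (fun y : ℝ => s * (y + 1)) s x := by
    simpa using ((hasDerivAt_id x).add_const 1).const_mul s
  have h2 := (Real.hasDerivAt_sin (s * (x + 1))).comp x h1
  exact (((h2.neg).mul_const s).const_mul S0).div_const d

private lemma hdR' (s S0 d : ℝ) (x : ℝ) :
    HasDerivAt (fun y : ℝ => S0 * (-Real.sin (s * (y - 1)) * s) / d)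
      (S0 * (-(Real.cos (s * (x - 1)) * s) * s) / d) x := by
  have h1 : HasDerivAt (fun y : ℝ => s * (y - 1)) s x := by
    simpa using ((hasDerivAt_id x).sub_const 1).const_mul s
  have h2 := (Real.hasDerivAt_sin (s * (x - 1))).comp x h1
  exact (((h2.neg).mul_const s).const_mul S0).div_const d

/-- Properties of the outer labor profile of a quasi-equilibrium spike at
`x0`: continuity, value `S0` at the spike, the ODE `l'' + ab l = 0` on either
side, Neumann conditions at `±1`, and the jump of the one-sided derivatives
across `x0`. -/
theorem spike_outer_profile (a b x0 S0 : ℝ) (ha : 0 < a) (hb : 0 < b)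
    (hx0 : x0 ∈ Ioo (-1 : ℝ) 1) (hS0 : 0 < S0)
    (hc1 : Real.cos (Real.sqrt (a * b) * (x0 - 1)) ≠ 0)
    (hc2 : Real.cos (Real.sqrt (a * b) * (x0 + 1)) ≠ 0) :
    ContinuousOn (spikeOuter a b x0 S0) (Icc (-1) 1) ∧
    spikeOuter a b x0 S0 x0 = S0 ∧
    (∀ x ∈ Ioo x0 1,
      deriv (deriv (spikeOuter a b x0 S0)) x + a * b * spikeOuter a b x0 S0 x = 0) ∧
    (∀ x ∈ Ioo (-1 : ℝ) x0,
      deriv (deriv (spikeOuter a b x0 S0)) x + a * b * spikeOuter a b x0 S0 x = 0) ∧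
    derivWithin (spikeOuter a b x0 S0) (Icc (-1) 1) 1 = 0 ∧
    derivWithin (spikeOuter a b x0 S0) (Icc (-1) 1) (-1) = 0 ∧
    derivWithin (spikeOuter a b x0 S0) (Ici x0) x0
        - derivWithin (spikeOuter a b x0 S0) (Iic x0) x0
      = -S0 * Real.sqrt (a * b)
        * (Real.tan (Real.sqrt (a * b) * (x0 - 1))
            - Real.tan (Real.sqrt (a * b) * (x0 + 1))) := by
  set s := Real.sqrt (a * b) with hs
  have hss : s * s = a * b := Real.mul_self_sqrt (by positivity)
  set fL : ℝ → ℝ := fun y => S0 * Real.cos (s * (y + 1)) / Real.cos (s * (x0 + 1)) with hfL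
  set fR : ℝ → ℝ := fun y => S0 * Real.cos (s * (y - 1)) / Real.cos (s * (x0 - 1)) with hfR
  have hfLx0 : fL x0 = S0 := by
    simp only [hfL]
    rw [mul_div_assoc, div_self hc2, mul_one]
  have hfRx0 : fR x0 = S0 := by
    simp only [hfR]
    rw [mul_div_assoc, div_self hc1, mul_one]
  have hcont : Continuous (spikeOuter a b x0 S0) := by
    have hL : Continuous fL := by
      apply Continuous.div_const
      exact continuous_const.mul (Real.continuous_cos.comp (by continuity))
    have hR : Continuous fR := by
      apply Continuous.div_const
      exact continuous_const.mul (Real.continuous_cos.comp (by continuity))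
    have := Continuous.if_le hL hR continuous_id continuous_const
      (fun x hx => by obtain rfl : x = x0 := hx; rw [hfLx0, hfRx0])
    exact this
  have hval : spikeOuter a b x0 S0 x0 = S0 := by
    have : spikeOuter a b x0 S0 x0 = fL x0 := if_pos le_rfl
    rw [this, hfLx0]
  -- derivative of fL, fR as functions
  have hdfL : deriv fL = fun y => S0 * (-Real.sin (s * (y + 1)) * s) / Real.cos (s * (x0 + 1)) :=
    funext fun y => (hdL s S0 _ y).deriv
  have hdfR : deriv fR = fun y => S0 * (-Real.sin (s * (y - 1)) * s) / Real.cos (s * (x0 - 1)) :=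
    funext fun y => (hdR s S0 _ y).deriv
  -- ODE on (x0, 1)
  have hODEr : ∀ x ∈ Ioo x0 1,
      deriv (deriv (spikeOuter a b x0 S0)) x + a * b * spikeOuter a b x0 S0 x = 0 := by
    intro x hx
    have hev : spikeOuter a b x0 S0 =ᶠ[nhds x] fR :=
      Filter.eventuallyEq_of_mem (Ioi_mem_nhds hx.1)
        (fun y hy => if_neg (not_le.mpr hy))
    have h2 : deriv (deriv (spikeOuter a b x0 S0)) x = deriv (deriv fR) x :=
      (hev.deriv).deriv_eq
    have hsp : spikeOuter a b x0 S0 x = fR x := hev.eq_of_nhds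
    rw [h2, hsp, hdfR, (hdR' s S0 _ x).deriv]
    simp only [hfR]
    rw [← hss]
    field_simp
    ring
  have hODEl : ∀ x ∈ Ioo (-1 : ℝ) x0,
      deriv (deriv (spikeOuter a b x0 S0)) x + a * b * spikeOuter a b x0 S0 x = 0 := by
    intro x hx
    have hev : spikeOuter a b x0 S0 =ᶠ[nhds x] fL :=
      Filter.eventuallyEq_of_mem (Iio_mem_nhds hx.2)
        (fun y hy => if_pos (le_of_lt hy))
    have h2 : deriv (deriv (spikeOuter a b x0 S0)) x = deriv (deriv fL) x :=
      (hev.deriv).deriv_eq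
    have hsp : spikeOuter a b x0 S0 x = fL x := hev.eq_of_nhds
    rw [h2, hsp, hdfL, (hdL' s S0 _ x).deriv]
    simp only [hfL]
    rw [← hss]
    field_simp
    ring
  -- Neumann at 1
  have hN1 : derivWithin (spikeOuter a b x0 S0) (Icc (-1) 1) 1 = 0 := by
    have hev : spikeOuter a b x0 S0 =ᶠ[nhds (1 : ℝ)] fR :=
      Filter.eventuallyEq_of_mem (Ioi_mem_nhds hx0.2)
        (fun y hy => if_neg (not_le.mpr hy))
    have h1 : derivWithin (spikeOuter a b x0 S0) (Icc (-1) 1) 1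
        = derivWithin fR (Icc (-1) 1) 1 :=
      (hev.filter_mono nhdsWithin_le_nhds).derivWithin_eq hev.eq_of_nhds
    rw [h1, (hdR s S0 _ 1).hasDerivWithinAt.derivWithin
      ((uniqueDiffOn_Icc (by norm_num : (-1:ℝ) < 1)) 1 (by norm_num))]
    simp
  have hN2 : derivWithin (spikeOuter a b x0 S0) (Icc (-1) 1) (-1) = 0 := by
    have hev : spikeOuter a b x0 S0 =ᶠ[nhds (-1 : ℝ)] fL :=
      Filter.eventuallyEq_of_mem (Iio_mem_nhds hx0.1)
        (fun y hy => if_pos (le_of_lt hy))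
    have h1 : derivWithin (spikeOuter a b x0 S0) (Icc (-1) 1) (-1)
        = derivWithin fL (Icc (-1) 1) (-1) :=
      (hev.filter_mono nhdsWithin_le_nhds).derivWithin_eq hev.eq_of_nhds
    rw [h1, (hdL s S0 _ (-1)).hasDerivWithinAt.derivWithin
      ((uniqueDiffOn_Icc (by norm_num : (-1:ℝ) < 1)) (-1) (by norm_num))]
    simp
  -- jump of one-sided derivatives
  have hJ : derivWithin (spikeOuter a b x0 S0) (Ici x0) x0
        - derivWithin (spikeOuter a b x0 S0) (Iic x0) x0
      = -S0 * s * (Real.tan (s * (x0 - 1)) - Real.tan (s * (x0 + 1))) := by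
    have hR1 : derivWithin (spikeOuter a b x0 S0) (Ici x0) x0
        = derivWithin fR (Ici x0) x0 := by
      apply derivWithin_congr
      · intro y hy
        rcases eq_or_lt_of_le (mem_Ici.mp hy) with h | h
        · rw [← h]
          show (if x0 ≤ x0 then _ else _) = fR x0
          rw [if_pos le_rfl]
          show fL x0 = fR x0
          rw [hfLx0, hfRx0]
        · exact if_neg (not_le.mpr h)
      · show (if x0 ≤ x0 then _ else _) = fR x0
        rw [if_pos le_rfl]
        show fL x0 = fR x0
        rw [hfLx0, hfRx0]
    have hL1 : derivWithin (spikeOuter a b x0 S0) (Iic x0) x0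
        = derivWithin fL (Iic x0) x0 := by
      apply derivWithin_congr
      · intro y hy
        exact if_pos (mem_Iic.mp hy)
      · exact if_pos le_rfl
    rw [hR1, hL1, (hdR s S0 _ x0).hasDerivWithinAt.derivWithin (uniqueDiffOn_Ici x0 x0 self_mem_Ici),
      (hdL s S0 _ x0).hasDerivWithinAt.derivWithin (uniqueDiffOn_Iic x0 x0 self_mem_Iic),
      Real.tan_eq_sin_div_cos, Real.tan_eq_sin_div_cos]
    field_simp
    ring
  exact ⟨hcont.continuousOn, hval, hODEr, hODEl, hN1, hN2, hJ⟩
end
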